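/- arXiv:1008.1716 — 4 statements merged into one kernel-verified Lean document; each statement's English description precedes it below -/
import Mathlib

section
/- There exists an absolute constant C > 0 such that the following holds. Let X_1, ..., X_n be i.i.d. random vectors in R^p distributed as N_p(0, Σ), and let X̄ = (1/n) Σ_{k=1}^n X_k be the sample mean. Then for every p × p matrix M, E ‖M ∘ (X̄ X̄^T)‖ ≤ E ‖M‖ ‖X̄‖_∞² ≤ C ‖M‖ ‖Σ‖ log(2p)/n, where ‖x‖_∞ = max_i |x_i| is the ℓ_∞ norm on R^p. -/
open MeasureTheory ProbabilityTheory Matrix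

/-- The ℓ₂ → ℓ₂ operator (spectral) norm of a real matrix. -/
noncomputable def opNorm {p : ℕ} (A : Matrix (Fin p) (Fin p) ℝ) : ℝ :=
  ‖(Matrix.toEuclideanCLM (𝕜 := ℝ) (n := Fin p) A)‖

/-- The ℓ₁ → ℓ₂ operator norm `max_j (∑ i m_{ij}²)^{1/2}`. -/
noncomputable def norm12 {p : ℕ} (M : Matrix (Fin p) (Fin p) ℝ) : ℝ :=
  ⨆ j : Fin p, Real.sqrt (∑ i, (M i j) ^ 2)

/-- Standard Gaussian measure on ℝ^p (product of standard normals). -/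
noncomputable def stdGaussianPi (p : ℕ) : Measure (Fin p → ℝ) :=
  Measure.pi fun _ => gaussianReal 0 1

/-- The centered multivariate normal distribution `N_p(0, S)` on ℝ^p, realized as the
pushforward of the standard Gaussian by the positive-semidefinite square root of `S`. -/
noncomputable def multiGaussian {p : ℕ} {S : Matrix (Fin p) (Fin p) ℝ}
    (hS : S.PosSemidef) : Measure (Fin p → ℝ) :=
  Measure.map (fun x => ((hS.1.eigenvectorUnitary : Matrix (Fin p) (Fin p) ℝ) *
    diagonal (Real.sqrt ∘ hS.1.eigenvalues) *
    (star hS.1.eigenvectorUnitary : Matrix (Fin p) (Fin p) ℝ)).mulVec x) (stdGaussianPi p)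

/-- The sample covariance matrix `(1/n) ∑ₖ Xₖ Xₖᵀ`. -/
noncomputable def sampleCov {p n : ℕ} (X : Fin n → Fin p → ℝ) : Matrix (Fin p) (Fin p) ℝ :=
  (n : ℝ)⁻¹ • ∑ k, vecMulVec (X k) (X k)


/-- The ℓ∞ norm `max_i |x_i|` on ℝ^p. -/
noncomputable def linf {p : ℕ} (x : Fin p → ℝ) : ℝ := ⨆ i : Fin p, |x i|



/-- The positive-semidefinite square root used in `multiGaussian`. -/
noncomputable abbrev psdSqrt {p : ℕ} {S : Matrix (Fin p) (Fin p) ℝ} (hS : S.PosSemidef) :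
    Matrix (Fin p) (Fin p) ℝ :=
  (hS.1.eigenvectorUnitary : Matrix (Fin p) (Fin p) ℝ) *
    diagonal (Real.sqrt ∘ hS.1.eigenvalues) *
    (star hS.1.eigenvectorUnitary : Matrix (Fin p) (Fin p) ℝ)

lemma psdSqrt_isHermitian {p : ℕ} {S : Matrix (Fin p) (Fin p) ℝ} (hS : S.PosSemidef) :
    (psdSqrt hS).IsHermitian := by
  unfold psdSqrt Matrix.IsHermitian
  have hd : (diagonal (Real.sqrt ∘ hS.1.eigenvalues))ᴴ = diagonal (Real.sqrt ∘ hS.1.eigenvalues) := by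
    rw [Matrix.diagonal_conjTranspose, star_trivial]
  rw [Matrix.conjTranspose_mul, Matrix.conjTranspose_mul, hd, Matrix.star_eq_conjTranspose,
    Matrix.conjTranspose_conjTranspose, Matrix.mul_assoc]

lemma psdSqrt_mul_self {p : ℕ} {S : Matrix (Fin p) (Fin p) ℝ} (hS : S.PosSemidef) :
    psdSqrt hS * psdSqrt hS = S := by
  unfold psdSqrt
  conv_rhs => rw [hS.1.spectral_theorem]
  rw [Unitary.conjStarAlgAut_apply]
  have hU : (star hS.1.eigenvectorUnitary : Matrix (Fin p) (Fin p) ℝ) *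
      (hS.1.eigenvectorUnitary : Matrix (Fin p) (Fin p) ℝ) = 1 := Unitary.coe_star_mul_self _
  have hD : diagonal (Real.sqrt ∘ hS.1.eigenvalues) * diagonal (Real.sqrt ∘ hS.1.eigenvalues)
      = diagonal (RCLike.ofReal ∘ hS.1.eigenvalues) := by
    rw [diagonal_mul_diagonal]
    congr 1; funext i
    simp [Real.mul_self_sqrt (hS.eigenvalues_nonneg i)]
  calc _ = (hS.1.eigenvectorUnitary : Matrix (Fin p) (Fin p) ℝ) *
        (diagonal (Real.sqrt ∘ hS.1.eigenvalues) *
        ((star hS.1.eigenvectorUnitary : Matrix (Fin p) (Fin p) ℝ) *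
        (hS.1.eigenvectorUnitary : Matrix (Fin p) (Fin p) ℝ)) *
        diagonal (Real.sqrt ∘ hS.1.eigenvalues)) *
        (star hS.1.eigenvectorUnitary : Matrix (Fin p) (Fin p) ℝ) := by
          simp only [Matrix.mul_assoc]
    _ = _ := by rw [hU, Matrix.mul_one, hD]

section AuxProof
open Real

lemma gauss_transfer (g : ℝ → ℝ) :
    ∫ x, g x ∂(gaussianReal 0 1) = ∫ x, gaussianPDFReal 0 1 x * g x := by
  rw [gaussianReal_of_var_ne_zero 0 one_ne_zero]
  have : (gaussianPDF 0 1) = fun x => (((gaussianPDFReal 0 1 x).toNNReal : NNReal) : ENNReal) := by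
    funext x; rfl
  rw [this, integral_withDensity_eq_integral_smul]
  · congr 1; funext x
    rw [NNReal.smul_def, Real.coe_toNNReal _ (gaussianPDFReal_nonneg 0 1 x), smul_eq_mul]
  · exact (measurable_gaussianPDFReal 0 1).real_toNNReal

lemma gauss_integrable_iff {g : ℝ → ℝ} (hg : Measurable g) :
    Integrable g (gaussianReal 0 1) ↔ Integrable (fun x => g x * gaussianPDFReal 0 1 x) := by
  rw [gaussianReal_of_var_ne_zero 0 one_ne_zero]
  rw [integrable_withDensity_iff (measurable_gaussianPDF 0 1) (ae_of_all _ fun x => ENNReal.ofReal_lt_top)]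
  constructor <;> intro h <;> refine h.congr (ae_of_all _ fun x => ?_) <;>
    simp [gaussianPDF, ENNReal.toReal_ofReal (gaussianPDFReal_nonneg 0 1 x)]

lemma integrable_exp_mul_gauss (t : ℝ) :
    Integrable (fun x => Real.exp (t * x)) (gaussianReal 0 1) := by
  rw [gauss_integrable_iff (by fun_prop)]
  have h : ∀ x : ℝ, Real.exp (t*x) * gaussianPDFReal 0 1 x = Real.exp (t^2/2) * gaussianPDFReal t 1 x := by
    intro x
    simp only [gaussianPDFReal, NNReal.coe_one, mul_one, sub_zero]
    rw [mul_left_comm, mul_left_comm (Real.exp _), ← Real.exp_add, ← Real.exp_add]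
    congr 2
    ring
  simp_rw [h]
  exact (integrable_gaussianPDFReal t 1).const_mul _

lemma integral_exp_mul_gauss (t : ℝ) :
    ∫ x, Real.exp (t * x) ∂(gaussianReal 0 1) = Real.exp (t^2/2) := by
  rw [gauss_transfer]
  have h : ∀ x, gaussianPDFReal 0 1 x * Real.exp (t*x) = Real.exp (t^2/2) * gaussianPDFReal t 1 x := by
    intro x
    rw [mul_comm]
    simp only [gaussianPDFReal, NNReal.coe_one, mul_one, sub_zero]
    rw [mul_left_comm, mul_left_comm (Real.exp _), ← Real.exp_add, ← Real.exp_add]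
    congr 2
    ring
  simp_rw [h]
  rw [integral_const_mul, integral_gaussianPDFReal_eq_one t one_ne_zero, mul_one]

lemma integrable_exp_quarter_sq_gauss :
    Integrable (fun x => Real.exp (x^2/4)) (gaussianReal 0 1) := by
  rw [gauss_integrable_iff (by fun_prop)]
  have h : ∀ x : ℝ, Real.exp (x^2/4) * gaussianPDFReal 0 1 x
      = (Real.sqrt (2 * π))⁻¹ * Real.exp (-(4⁻¹) * x^2) := by
    intro x
    simp only [gaussianPDFReal, NNReal.coe_one, mul_one, sub_zero]
    rw [mul_left_comm, ← Real.exp_add]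
    congr 2
    ring
  simp_rw [h]
  exact (integrable_exp_neg_mul_sq (by norm_num)).const_mul _

lemma integral_exp_quarter_sq_gauss :
    ∫ x, Real.exp (x^2/4) ∂(gaussianReal 0 1) = Real.sqrt 2 := by
  rw [gauss_transfer]
  have h : ∀ x : ℝ, gaussianPDFReal 0 1 x * Real.exp (x^2/4)
      = (Real.sqrt (2 * π))⁻¹ * Real.exp (-(4⁻¹) * x^2) := by
    intro x
    rw [mul_comm]
    simp only [gaussianPDFReal, NNReal.coe_one, mul_one, sub_zero]
    rw [mul_left_comm, ← Real.exp_add]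
    congr 2
    ring
  simp_rw [h]
  rw [integral_const_mul, integral_gaussian]
  rw [← Real.sqrt_inv, ← Real.sqrt_mul (by positivity)]
  rw [show ((2:ℝ)*π)⁻¹ * (π / 4⁻¹) = 2 by field_simp; ring]

variable {μ : Measure ℝ} [IsProbabilityMeasure μ]

theorem integrable_pi_prod : ∀ {m : ℕ} (f : Fin m → ℝ → ℝ), (∀ j, Integrable (f j) μ) →
    Integrable (fun y : Fin m → ℝ => ∏ j, f j (y j)) (Measure.pi fun _ => μ) := by
  intro m
  induction m with
  | zero => intro f hf; simp [integrable_const_iff]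
  | succ n n_ih =>
      intro f hf
      have h := ((measurePreserving_piFinSuccAbove (fun _ : Fin (n+1) => μ) 0).symm)
      rw [← h.integrable_comp_emb (MeasurableEquiv.measurableEmbedding _)]
      simp_rw [MeasurableEquiv.piFinSuccAbove_symm_apply, Fin.insertNthEquiv,
        Fin.prod_univ_succ, Fin.insertNth_zero]
      simp only [Fin.zero_succAbove, cast_eq, Function.comp_def, Fin.cons_zero, Fin.cons_succ]
      exact Integrable.mul_prod (hf 0) (n_ih _ (fun i => hf _))

theorem integral_pi_prod : ∀ {m : ℕ} (f : Fin m → ℝ → ℝ), (∀ j, Integrable (f j) μ) →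
    ∫ y, ∏ j, f j (y j) ∂(Measure.pi fun _ => μ) = ∏ j, ∫ x, f j x ∂μ := by
  intro m
  induction m with
  | zero => intro f hf; simp
  | succ n n_ih =>
      intro f hf
      calc ∫ y, ∏ j, f j (y j) ∂(Measure.pi fun _ => μ)
          = ∫ x : ℝ × (Fin n → ℝ), f 0 x.1 * ∏ i : Fin n, f i.succ (x.2 i)
              ∂(μ.prod (Measure.pi fun _ => μ)) := by
            rw [← ((measurePreserving_piFinSuccAbove (fun _ : Fin (n+1) => μ) 0).symm).integral_comp']
            simp_rw [MeasurableEquiv.piFinSuccAbove_symm_apply, Fin.insertNthEquiv,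
              Fin.prod_univ_succ, Fin.insertNth_zero]
            simp only [Fin.zero_succAbove, cast_eq, Function.comp_def, Fin.cons_zero, Fin.cons_succ,
              Equiv.coe_fn_mk]
        _ = (∫ x, f 0 x ∂μ) * ∏ i : Fin n, ∫ x, f i.succ x ∂μ := by
            rw [← n_ih _ (fun i => hf _), ← integral_prod_mul]
        _ = ∏ j, ∫ x, f j x ∂μ := by rw [Fin.prod_univ_succ]


end AuxProof

section Aux2
open Real

lemma measurable_mulVec {p : ℕ} (A : Matrix (Fin p) (Fin p) ℝ) :
    Measurable (fun y : Fin p → ℝ => A.mulVec y) := by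
  unfold mulVec dotProduct
  exact measurable_pi_lambda _ fun i => Finset.measurable_sum _ fun j _ =>
    (measurable_pi_apply j).const_mul _

lemma sum_sq_sqrt_row {p : ℕ} {S : Matrix (Fin p) (Fin p) ℝ} (hS : S.PosSemidef) (i : Fin p) :
    ∑ j, psdSqrt hS i j ^ 2 = S i i := by
  have h := psdSqrt_isHermitian hS
  simp_rw [sq]
  rw [show ∑ j, psdSqrt hS i j * psdSqrt hS i j = ∑ j, psdSqrt hS i j * psdSqrt hS j i from
    Finset.sum_congr rfl fun j _ => by rw [← h.apply i j]; simp]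
  rw [← Matrix.mul_apply, psdSqrt_mul_self hS]

lemma mgf_multiGaussian_coord {p : ℕ} {S : Matrix (Fin p) (Fin p) ℝ} (hS : S.PosSemidef)
    (i : Fin p) (c t : ℝ) :
    Integrable (fun x : Fin p → ℝ => Real.exp (t * (c * x i))) (multiGaussian hS) ∧
    ∫ x, Real.exp (t * (c * x i)) ∂(multiGaussian hS) = Real.exp ((c^2 * S i i) * t^2/2) := by
  have hmeas : Measurable (fun x : Fin p → ℝ => Real.exp (t * (c * x i))) := by fun_prop
  have hprod : ∀ y : Fin p → ℝ, Real.exp (t * (c * ((psdSqrt hS).mulVec y) i))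
      = ∏ j, Real.exp ((t * c * psdSqrt hS i j) * y j) := by
    intro y
    rw [← Real.exp_sum]
    congr 1
    unfold mulVec dotProduct
    rw [Finset.mul_sum, Finset.mul_sum]
    exact Finset.sum_congr rfl fun j _ => by ring
  constructor
  · rw [multiGaussian, integrable_map_measure hmeas.aestronglyMeasurable
      (measurable_mulVec _).aemeasurable]
    have : (fun y : Fin p → ℝ => Real.exp (t * (c * ((psdSqrt hS).mulVec y) i)))
        = fun y => ∏ j, Real.exp ((t * c * psdSqrt hS i j) * y j) := funext hprod
    rw [Function.comp_def]
    simp_rw [this]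
    exact integrable_pi_prod _ (fun j => integrable_exp_mul_gauss _)
  · rw [multiGaussian, integral_map (measurable_mulVec _).aemeasurable hmeas.aestronglyMeasurable]
    simp_rw [hprod]
    rw [stdGaussianPi, integral_pi_prod (fun j y => Real.exp ((t * c * psdSqrt hS i j) * y))
      (fun j => integrable_exp_mul_gauss _)]
    simp_rw [integral_exp_mul_gauss, ← Real.exp_sum]
    congr 1
    rw [← Finset.sum_div]
    congr 1
    have : ∀ j : Fin p, (t * c * psdSqrt hS i j)^2 = (c^2 * t^2) * psdSqrt hS i j ^2 := fun j => by ring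
    simp_rw [this]
    rw [← Finset.mul_sum, sum_sq_sqrt_row hS i]
    ring

lemma exp_sq_bound {Ω : Type} [MeasureSpace Ω] [IsProbabilityMeasure (ℙ : Measure Ω)]
    {Z : Ω → ℝ} (hZ : Measurable Z) {σ2 : ℝ} {lam : ℝ} (hlam : 0 ≤ lam)
    (hc : lam * σ2 ≤ 1/4)
    (hint : ∀ t, Integrable (fun ω => Real.exp (t * Z ω)) ℙ)
    (hmgf : ∀ t, ∫ ω, Real.exp (t * Z ω) ∂ℙ = Real.exp (σ2 * t^2/2)) :
    Integrable (fun ω => Real.exp (lam * Z ω^2)) ℙ ∧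
      ∫ ω, Real.exp (lam * Z ω ^2) ∂ℙ ≤ Real.sqrt 2 := by
  set γ := gaussianReal 0 1 with hγ
  have : IsProbabilityMeasure γ := by rw [hγ]; infer_instance
  set a := Real.sqrt (2 * lam) with ha
  have ha2 : a^2 = 2 * lam := Real.sq_sqrt (by linarith)
  -- pointwise linearization
  have key : ∀ z : ℝ, ENNReal.ofReal (Real.exp (lam * z^2))
      = ∫⁻ g, ENNReal.ofReal (Real.exp ((a * z) * g)) ∂γ := by
    intro z
    rw [← ofReal_integral_eq_lintegral_ofReal (integrable_exp_mul_gauss (a*z))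
      (ae_of_all _ fun g => (Real.exp_pos _).le)]
    rw [integral_exp_mul_gauss]
    congr 2
    rw [mul_pow, ha2]; ring
  -- main lintegral computation
  have swap : ∫⁻ ω, ENNReal.ofReal (Real.exp (lam * Z ω ^2)) ∂ℙ
      = ∫⁻ g, ∫⁻ ω, ENNReal.ofReal (Real.exp ((a * g) * Z ω)) ∂ℙ ∂γ := by
    calc ∫⁻ ω, ENNReal.ofReal (Real.exp (lam * Z ω ^2)) ∂ℙ
        = ∫⁻ ω, ∫⁻ g, ENNReal.ofReal (Real.exp ((a * Z ω) * g)) ∂γ ∂ℙ := by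
          simp_rw [← key]
      _ = ∫⁻ g, ∫⁻ ω, ENNReal.ofReal (Real.exp ((a * Z ω) * g)) ∂ℙ ∂γ := by
          apply lintegral_lintegral_swap
          apply Measurable.aemeasurable
          apply ENNReal.measurable_ofReal.comp
          exact (Real.measurable_exp.comp (((hZ.comp measurable_fst).const_mul a).mul measurable_snd))
      _ = ∫⁻ g, ∫⁻ ω, ENNReal.ofReal (Real.exp ((a * g) * Z ω)) ∂ℙ ∂γ := by
          congr 1; funext g; congr 1; funext ω; ring_nf
  have inner : ∀ g : ℝ, ∫⁻ ω, ENNReal.ofReal (Real.exp ((a * g) * Z ω)) ∂ℙ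
      = ENNReal.ofReal (Real.exp ((lam * σ2) * g^2)) := by
    intro g
    rw [← ofReal_integral_eq_lintegral_ofReal (hint (a*g)) (ae_of_all _ fun ω => (Real.exp_pos _).le)]
    rw [hmgf]
    congr 2
    rw [mul_pow, ha2]; ring
  have bound : ∫⁻ ω, ENNReal.ofReal (Real.exp (lam * Z ω ^2)) ∂ℙ ≤ ENNReal.ofReal (Real.sqrt 2) := by
    rw [swap]
    simp_rw [inner]
    calc ∫⁻ g, ENNReal.ofReal (Real.exp ((lam * σ2) * g^2)) ∂γ
        ≤ ∫⁻ g, ENNReal.ofReal (Real.exp (g^2/4)) ∂γ := by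
          apply lintegral_mono
          intro g
          apply ENNReal.ofReal_le_ofReal
          apply Real.exp_le_exp.2
          have : (lam * σ2) * g^2 ≤ (1/4) * g^2 :=
            mul_le_mul_of_nonneg_right hc (sq_nonneg g)
          linarith
      _ = ENNReal.ofReal (Real.sqrt 2) := by
          rw [← ofReal_integral_eq_lintegral_ofReal integrable_exp_quarter_sq_gauss
            (ae_of_all _ fun g => (Real.exp_pos _).le), integral_exp_quarter_sq_gauss]
  have hmeas : Measurable (fun ω => Real.exp (lam * Z ω ^ 2)) := by fun_prop
  have hinteg : Integrable (fun ω => Real.exp (lam * Z ω^2)) ℙ := by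
    refine ⟨hmeas.aestronglyMeasurable, ?_⟩
    rw [hasFiniteIntegral_iff_ofReal (ae_of_all _ fun ω => (Real.exp_pos _).le)]
    exact lt_of_le_of_lt bound ENNReal.ofReal_lt_top
  refine ⟨hinteg, ?_⟩
  rw [integral_eq_lintegral_of_nonneg_ae (ae_of_all _ fun ω => (Real.exp_pos _).le)
    hmeas.aestronglyMeasurable]
  rw [← ENNReal.toReal_ofReal (Real.sqrt_nonneg 2)]
  exact ENNReal.toReal_mono ENNReal.ofReal_ne_top bound

lemma opNorm_nonneg {p : ℕ} (A : Matrix (Fin p) (Fin p) ℝ) : 0 ≤ opNorm A := norm_nonneg _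

lemma abs_le_linf {p : ℕ} (x : Fin p → ℝ) (i : Fin p) : |x i| ≤ linf x :=
  le_ciSup (f := fun i => |x i|) (Set.Finite.bddAbove (Set.finite_range _)) i

lemma linf_nonneg {p : ℕ} [NeZero p] (x : Fin p → ℝ) : 0 ≤ linf x :=
  le_trans (abs_nonneg _) (abs_le_linf x ⟨0, Nat.pos_of_ne_zero (NeZero.ne p)⟩)

lemma hadamard_eq_diag_mul {p : ℕ} (M : Matrix (Fin p) (Fin p) ℝ) (x : Fin p → ℝ) :
    Matrix.hadamard M (vecMulVec x x) = diagonal x * M * diagonal x := by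
  ext i j
  simp [Matrix.hadamard_apply, vecMulVec_apply, Matrix.mul_apply, Matrix.diagonal_apply,
    Finset.sum_ite_eq, Finset.sum_ite_eq']
  ring

lemma opNorm_diagonal_le {p : ℕ} [NeZero p] (x : Fin p → ℝ) : opNorm (diagonal x) ≤ linf x := by
  apply ContinuousLinearMap.opNorm_le_bound _ (linf_nonneg x)
  intro v
  rw [EuclideanSpace.norm_eq, EuclideanSpace.norm_eq]
  rw [← Real.sqrt_sq (linf_nonneg x), ← Real.sqrt_mul (sq_nonneg _)]
  apply Real.sqrt_le_sqrt
  rw [Finset.mul_sum]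
  apply Finset.sum_le_sum
  intro i _
  have happ : (toEuclideanCLM (𝕜 := ℝ) (n := Fin p) (diagonal x) v) i = x i * v i := by
    have h2 := congrFun (ofLp_toEuclideanCLM (𝕜 := ℝ) (diagonal x) v) i
    simpa [Matrix.mulVec_diagonal, WithLp.equiv] using h2
  rw [happ]
  rw [Real.norm_eq_abs, Real.norm_eq_abs, abs_mul, mul_pow, sq_abs, sq_abs]
  apply mul_le_mul_of_nonneg_right _ (sq_nonneg _)
  rw [← sq_abs (x i)]
  exact pow_le_pow_left₀ (abs_nonneg _) (abs_le_linf x i) 2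

lemma opNorm_hadamard_le {p : ℕ} [NeZero p] (M : Matrix (Fin p) (Fin p) ℝ) (x : Fin p → ℝ) :
    opNorm (Matrix.hadamard M (vecMulVec x x)) ≤ opNorm M * (linf x)^2 := by
  rw [hadamard_eq_diag_mul]
  unfold opNorm
  rw [_root_.map_mul, _root_.map_mul]
  calc ‖toEuclideanCLM (𝕜 := ℝ) (diagonal x) * toEuclideanCLM (𝕜 := ℝ) M * toEuclideanCLM (𝕜 := ℝ) (diagonal x)‖
      ≤ ‖toEuclideanCLM (𝕜 := ℝ) (diagonal x) * toEuclideanCLM (𝕜 := ℝ) M‖ * ‖toEuclideanCLM (𝕜 := ℝ) (diagonal x)‖ := norm_mul_le _ _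
    _ ≤ (‖toEuclideanCLM (𝕜 := ℝ) (diagonal x)‖ * ‖toEuclideanCLM (𝕜 := ℝ) M‖) * ‖toEuclideanCLM (𝕜 := ℝ) (diagonal x)‖ :=
        mul_le_mul_of_nonneg_right (norm_mul_le _ _) (norm_nonneg _)
    _ ≤ (linf x * ‖toEuclideanCLM (𝕜 := ℝ) M‖) * linf x := by
        apply mul_le_mul
        · exact mul_le_mul_of_nonneg_right (opNorm_diagonal_le x) (norm_nonneg _)
        · exact opNorm_diagonal_le x
        · exact norm_nonneg _
        · exact mul_nonneg (linf_nonneg x) (norm_nonneg _)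
    _ = ‖toEuclideanCLM (𝕜 := ℝ) M‖ * (linf x)^2 := by ring

lemma diag_le_opNorm {p : ℕ} (S : Matrix (Fin p) (Fin p) ℝ) (i : Fin p) :
    S i i ≤ opNorm S := by
  set e : EuclideanSpace ℝ (Fin p) := EuclideanSpace.single i (1:ℝ) with he
  have h1 : (toEuclideanCLM (𝕜 := ℝ) S e) i = S i i := by
    have h2 := congrFun (ofLp_toEuclideanCLM (𝕜 := ℝ) S e) i
    have h2' : (toEuclideanCLM (𝕜 := ℝ) S e) i = (S *ᵥ (Pi.single i 1)) i := h2
    rw [h2']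
    simp [Matrix.mulVec_single]
  calc S i i = (toEuclideanCLM (𝕜 := ℝ) S e) i := h1.symm
    _ ≤ |(toEuclideanCLM (𝕜 := ℝ) S e) i| := le_abs_self _
    _ ≤ ‖toEuclideanCLM (𝕜 := ℝ) S e‖ := by
        rw [EuclideanSpace.norm_eq]
        rw [show |(toEuclideanCLM (𝕜 := ℝ) S e) i| = Real.sqrt (‖(toEuclideanCLM (𝕜 := ℝ) S e) i‖^2) by
          rw [Real.sqrt_sq_eq_abs, Real.norm_eq_abs, abs_abs]]
        apply Real.sqrt_le_sqrt
        exact Finset.single_le_sum (f := fun j => ‖(toEuclideanCLM (𝕜 := ℝ) S e) j‖^2)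
          (fun j _ => sq_nonneg _) (Finset.mem_univ i)
    _ ≤ ‖toEuclideanCLM (𝕜 := ℝ) S‖ * ‖e‖ := ContinuousLinearMap.le_opNorm _ _
    _ = opNorm S := by rw [EuclideanSpace.norm_single, norm_one, mul_one]; rfl

lemma eq_zero_of_opNorm_eq_zero {p : ℕ} {S : Matrix (Fin p) (Fin p) ℝ} (h : opNorm S = 0) :
    S = 0 := by
  have : toEuclideanCLM (𝕜 := ℝ) S = 0 := by
    rwa [opNorm, norm_eq_zero] at h
  have h0 : toEuclideanCLM (𝕜 := ℝ) (n := Fin p) (0 : Matrix (Fin p) (Fin p) ℝ) = 0 := map_zero _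
  exact EquivLike.injective (Matrix.toEuclideanCLM (𝕜 := ℝ) (n := Fin p)) (this.trans h0.symm)

lemma coord_mgf {p n : ℕ} (hn : 0 < n) {S : Matrix (Fin p) (Fin p) ℝ} (hS : S.PosSemidef)
    {Ω : Type} [MeasureSpace Ω] [IsProbabilityMeasure (ℙ : Measure Ω)]
    {X : Fin n → Ω → (Fin p → ℝ)} (hXm : ∀ k, Measurable (X k))
    (hXi : iIndepFun X ℙ)
    (hXd : ∀ k, Measure.map (X k) ℙ = multiGaussian hS)
    (i : Fin p) (t : ℝ) :
    Integrable (fun ω => Real.exp (t * ∑ k, (n:ℝ)⁻¹ * X k ω i)) ℙ ∧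
    ∫ ω, Real.exp (t * ∑ k, (n:ℝ)⁻¹ * X k ω i) ∂ℙ = Real.exp ((S i i / n) * t^2/2) := by
  have hn0 : (n:ℝ) ≠ 0 := Nat.cast_ne_zero.2 hn.ne'
  set Y : Fin n → Ω → ℝ := fun k ω => (n:ℝ)⁻¹ * X k ω i with hY
  have hYm : ∀ k, Measurable (Y k) := fun k => ((hXm k).eval (a := i)).const_mul _
  have hg : Measurable (fun v : Fin p → ℝ => (n:ℝ)⁻¹ * v i) :=
    (measurable_pi_apply i).const_mul _
  have hYi : iIndepFun Y ℙ :=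
    hXi.comp (fun _ => fun v : Fin p → ℝ => (n:ℝ)⁻¹ * v i) (fun _ => hg)
  have hmeasf : ∀ s : ℝ, Measurable (fun y : Fin p → ℝ => Real.exp (s * ((n:ℝ)⁻¹ * y i))) := by
    intro s; fun_prop
  have hYint : ∀ (s : ℝ) k, Integrable (fun ω => Real.exp (s * Y k ω)) ℙ := by
    intro s k
    have h := (mgf_multiGaussian_coord hS i ((n:ℝ)⁻¹) s).1
    rw [← hXd k, integrable_map_measure (hmeasf s).aestronglyMeasurable
      (hXm k).aemeasurable] at h
    exact h
  have hYmgf : ∀ (s : ℝ) k, mgf (Y k) ℙ s = Real.exp (((n:ℝ)⁻¹^2 * S i i) * s^2/2) := by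
    intro s k
    have h := (mgf_multiGaussian_coord hS i ((n:ℝ)⁻¹) s).2
    rw [← hXd k, integral_map (hXm k).aemeasurable (hmeasf s).aestronglyMeasurable] at h
    exact h
  have hsum : (fun ω => ∑ k, (n:ℝ)⁻¹ * X k ω i) = (∑ k, Y k) := by
    funext ω; rw [Finset.sum_apply]
  constructor
  · have := hYi.integrable_exp_mul_sum (t := t) hYm (s := Finset.univ) (fun k _ => hYint t k)
    simpa [← hsum] using this
  · have := hYi.mgf_sum hYm (t := t) Finset.univ
    have hL : mgf (∑ k, Y k) ℙ t = ∫ ω, Real.exp (t * ∑ k, (n:ℝ)⁻¹ * X k ω i) ∂ℙ := by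
      rw [mgf]
      exact integral_congr_ae (ae_of_all _ fun ω => by simp only [Finset.sum_apply]; rfl)
    rw [hL] at this
    rw [this]
    simp_rw [hYmgf t]
    rw [Finset.prod_const, Finset.card_univ, Fintype.card_fin, ← Real.exp_nat_mul]
    congr 1
    field_simp

lemma main_claim {p n : ℕ} [NeZero p] (hn : 0 < n) {S : Matrix (Fin p) (Fin p) ℝ}
    (hS : S.PosSemidef)
    {Ω : Type} [MeasureSpace Ω] [IsProbabilityMeasure (ℙ : Measure Ω)]
    {X : Fin n → Ω → (Fin p → ℝ)} (hXm : ∀ k, Measurable (X k))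
    (hXi : iIndepFun X ℙ)
    (hXd : ∀ k, Measure.map (X k) ℙ = multiGaussian hS)
    {lam : ℝ} (hlam : 0 < lam) (hc : ∀ i, lam * (S i i / n) ≤ 1/4) :
    Integrable (fun ω => (linf ((n : ℝ)⁻¹ • ∑ k, X k ω))^2) ℙ ∧
    ∫ ω, (linf ((n : ℝ)⁻¹ • ∑ k, X k ω))^2 ∂ℙ ≤ lam⁻¹ * Real.log (Real.sqrt 2 * p) := by
  have hp : 0 < p := Nat.pos_of_ne_zero (NeZero.ne p)
  set Z : Fin p → Ω → ℝ := fun i ω => ∑ k, (n:ℝ)⁻¹ * X k ω i with hZdef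
  have hZm : ∀ i, Measurable (Z i) := fun i =>
    Finset.measurable_sum _ fun k _ => ((hXm k).eval (a := i)).const_mul _
  have hXbar : ∀ ω i, ((n : ℝ)⁻¹ • ∑ k, X k ω) i = Z i ω := by
    intro ω i
    simp only [Pi.smul_apply, Finset.sum_apply, smul_eq_mul, hZdef, Finset.mul_sum]
  -- per-coordinate exponential moment
  have hEi : ∀ i : Fin p, Integrable (fun ω => Real.exp (lam * Z i ω^2)) ℙ ∧
      ∫ ω, Real.exp (lam * Z i ω ^2) ∂ℙ ≤ Real.sqrt 2 := fun i =>
    exp_sq_bound (hZm i) hlam.le (hc i)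
      (fun t => (coord_mgf hn hS hXm hXi hXd i t).1)
      (fun t => (coord_mgf hn hS hXm hXi hXd i t).2)
  -- the sum W
  set W : Ω → ℝ := fun ω => ∑ i, Real.exp (lam * Z i ω^2) with hWdef
  have hWm : Measurable W := Finset.measurable_sum _ fun i _ => by
    have := hZm i; fun_prop
  have hWint : Integrable W ℙ := integrable_finset_sum _ fun i _ => (hEi i).1
  have hW1 : ∀ ω, 1 ≤ W ω := by
    intro ω
    calc (1:ℝ) ≤ (p:ℝ) := by exact_mod_cast hp
      _ = ∑ _i : Fin p, (1:ℝ) := by simp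
      _ ≤ W ω := Finset.sum_le_sum fun i _ =>
          Real.one_le_exp (mul_nonneg hlam.le (sq_nonneg _))
  have hWpos : ∀ ω, 0 < W ω := fun ω => lt_of_lt_of_le one_pos (hW1 ω)
  set c : ℝ := ∫ ω, W ω ∂ℙ with hcdef
  have hc1 : 1 ≤ c := by
    calc (1:ℝ) = ∫ _ω, (1:ℝ) ∂ℙ := by simp
      _ ≤ c := integral_mono (integrable_const 1) hWint hW1
  have hcpos : 0 < c := lt_of_lt_of_le one_pos hc1
  have hcle : c ≤ Real.sqrt 2 * p := by
    rw [hcdef, hWdef]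
    rw [integral_finset_sum _ fun i _ => (hEi i).1]
    calc ∑ i : Fin p, ∫ ω, Real.exp (lam * Z i ω^2) ∂ℙ
        ≤ ∑ _i : Fin p, Real.sqrt 2 := Finset.sum_le_sum fun i _ => (hEi i).2
      _ = Real.sqrt 2 * p := by simp [mul_comm]
  -- log W integrable and its integral ≤ log c
  have hlogWm : Measurable (fun ω => Real.log (W ω)) := hWm.log
  have hlogWint : Integrable (fun ω => Real.log (W ω)) ℙ := by
    apply Integrable.mono' hWint hlogWm.aestronglyMeasurable
    refine ae_of_all _ fun ω => ?_
    rw [Real.norm_eq_abs, abs_of_nonneg (Real.log_nonneg (hW1 ω))]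
    calc Real.log (W ω) ≤ W ω - 1 := Real.log_le_sub_one_of_pos (hWpos ω)
      _ ≤ W ω := by linarith
  have hlogW_le : ∫ ω, Real.log (W ω) ∂ℙ ≤ Real.log c := by
    have hptw : ∀ ω, Real.log (W ω) ≤ Real.log c + (W ω / c - 1) := by
      intro ω
      have h := Real.log_le_sub_one_of_pos (div_pos (hWpos ω) hcpos)
      rw [Real.log_div (hWpos ω).ne' hcpos.ne'] at h
      linarith
    calc ∫ ω, Real.log (W ω) ∂ℙ
        ≤ ∫ ω, (Real.log c + (W ω / c - 1)) ∂ℙ := by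
          apply integral_mono hlogWint _ hptw
          exact (integrable_const _).add ((hWint.div_const c).sub (integrable_const 1))
      _ = Real.log c + (c / c - 1) := by
          have hg : Integrable (fun ω => W ω / c - 1) ℙ :=
            (hWint.div_const c).sub (integrable_const 1)
          rw [integral_add (integrable_const _) hg,
            integral_sub (hWint.div_const c) (integrable_const 1)]
          simp [integral_div, hcdef]
      _ = Real.log c := by rw [div_self hcpos.ne']; ring
  -- pointwise bound
  have hptw : ∀ ω, (linf ((n : ℝ)⁻¹ • ∑ k, X k ω))^2 ≤ lam⁻¹ * Real.log (W ω) := by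
    intro ω
    set x : Fin p → ℝ := (n : ℝ)⁻¹ • ∑ k, X k ω with hx
    obtain ⟨i0, -, hi0⟩ := Finset.exists_max_image Finset.univ (fun i => |x i|)
      ⟨⟨0, hp⟩, Finset.mem_univ _⟩
    have hlinf_eq : linf x = |x i0| :=
      le_antisymm (ciSup_le fun i => hi0 i (Finset.mem_univ i)) (abs_le_linf x i0)
    rw [hlinf_eq]
    rw [← mul_le_mul_iff_right₀ hlam, ← mul_assoc, mul_inv_cancel₀ hlam.ne', one_mul]
    calc lam * |x i0|^2 = Real.log (Real.exp (lam * (x i0)^2)) := by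
          rw [Real.log_exp, sq_abs]
      _ ≤ Real.log (W ω) := by
          apply Real.log_le_log (Real.exp_pos _)
          rw [hWdef]
          have : x i0 = Z i0 ω := hXbar ω i0
          rw [this]
          exact Finset.single_le_sum (f := fun i => Real.exp (lam * Z i ω^2))
            (fun i _ => (Real.exp_pos _).le) (Finset.mem_univ i0)
  -- measurability of linf ∘ Xbar
  have hlinfm : Measurable (fun ω => linf ((n : ℝ)⁻¹ • ∑ k, X k ω)) := by
    have h0 : Measurable (Finset.univ.sup' (Finset.univ_nonempty (α := Fin p))
        (fun (i : Fin p) (ω : Ω) => |((n : ℝ)⁻¹ • ∑ k, X k ω) i|)) := by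
      apply Finset.measurable_sup' _
      intro i _
      have hm : Measurable (fun ω => ((n : ℝ)⁻¹ • ∑ k, X k ω) i) := by
        simp_rw [fun ω => hXbar ω i]
        exact hZm i
      exact hm.abs
    have heq : (fun ω => linf ((n : ℝ)⁻¹ • ∑ k, X k ω)) = Finset.univ.sup'
        (Finset.univ_nonempty (α := Fin p)) (fun (i : Fin p) (ω : Ω) => |((n : ℝ)⁻¹ • ∑ k, X k ω) i|) := by
      funext ω
      rw [linf, ← Finset.sup'_univ_eq_ciSup, Finset.sup'_apply]
    rw [heq]
    exact h0
  have hIntlinf : Integrable (fun ω => (linf ((n : ℝ)⁻¹ • ∑ k, X k ω))^2) ℙ := by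
    apply Integrable.mono' (hlogWint.const_mul lam⁻¹) (hlinfm.pow_const 2).aestronglyMeasurable
    refine ae_of_all _ fun ω => ?_
    rw [Real.norm_eq_abs, abs_of_nonneg (sq_nonneg _)]
    exact hptw ω
  refine ⟨hIntlinf, ?_⟩
  calc ∫ ω, (linf ((n : ℝ)⁻¹ • ∑ k, X k ω))^2 ∂ℙ
      ≤ ∫ ω, lam⁻¹ * Real.log (W ω) ∂ℙ :=
        integral_mono hIntlinf (hlogWint.const_mul lam⁻¹) hptw
    _ = lam⁻¹ * ∫ ω, Real.log (W ω) ∂ℙ := integral_const_mul _ _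
    _ ≤ lam⁻¹ * Real.log c := by
        apply mul_le_mul_of_nonneg_left hlogW_le (inv_nonneg.2 hlam.le)
    _ ≤ lam⁻¹ * Real.log (Real.sqrt 2 * p) := by
        apply mul_le_mul_of_nonneg_left _ (inv_nonneg.2 hlam.le)
        exact Real.log_le_log hcpos hcle

end Aux2

/-- **Centering.** For the sample mean `X̄`,
`E ‖M ∘ (X̄ X̄ᵀ)‖ ≤ E ‖M‖ ‖X̄‖∞² ≤ C ‖M‖ ‖Σ‖ log(2p)/n`. -/
theorem centering_sample_mean :
    ∃ C : ℝ, 0 < C ∧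
      ∀ (p n : ℕ), 0 < p → 0 < n →
      ∀ (S : Matrix (Fin p) (Fin p) ℝ) (hS : S.PosSemidef)
        (Ω : Type) (_ : MeasureSpace Ω), IsProbabilityMeasure (ℙ : Measure Ω) →
      ∀ (X : Fin n → Ω → (Fin p → ℝ)),
        (∀ k, Measurable (X k)) →
        iIndepFun X ℙ →
        (∀ k, Measure.map (X k) ℙ = multiGaussian hS) →
      ∀ (M : Matrix (Fin p) (Fin p) ℝ),
        (∫ ω, opNorm (Matrix.hadamard M
              (vecMulVec ((n : ℝ)⁻¹ • ∑ k, X k ω) ((n : ℝ)⁻¹ • ∑ k, X k ω))) ∂ℙ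
            ≤ ∫ ω, opNorm M * (linf ((n : ℝ)⁻¹ • ∑ k, X k ω)) ^ 2 ∂ℙ) ∧
        (∫ ω, opNorm M * (linf ((n : ℝ)⁻¹ • ∑ k, X k ω)) ^ 2 ∂ℙ
            ≤ C * opNorm M * opNorm S * Real.log (2 * p) / n) := by
  refine ⟨4, by norm_num, ?_⟩
  intro p n hp hn S hS Ω _ hP X hXm hXi hXd M
  haveI := hP
  haveI : NeZero p := ⟨hp.ne'⟩
  have hn0 : (0:ℝ) < n := by exact_mod_cast hn
  have hop : 0 ≤ opNorm S := norm_nonneg _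
  have hp1 : (1:ℝ) ≤ p := by exact_mod_cast hp
  have hsq : Real.sqrt 2 ^ 2 = 2 := Real.sq_sqrt (by norm_num)
  have hs2 : Real.sqrt 2 ≤ 2 := by nlinarith [Real.sqrt_nonneg 2]
  have hs1 : (1:ℝ) ≤ Real.sqrt 2 := by nlinarith [Real.sqrt_nonneg 2]
  have hsp_pos : (0:ℝ) < Real.sqrt 2 * p := by nlinarith
  have hlog_le : Real.log (Real.sqrt 2 * p) ≤ Real.log (2 * p) := by
    apply Real.log_le_log hsp_pos
    nlinarith
  -- integrability via a universally valid lam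
  set lam0 : ℝ := n / (4 * (opNorm S + 1)) with hlam0def
  have hlam0 : 0 < lam0 := div_pos hn0 (by linarith)
  have hc0 : ∀ i, lam0 * (S i i / n) ≤ 1/4 := by
    intro i
    have hd := diag_le_opNorm S i
    rw [hlam0def]
    rw [div_mul_eq_mul_div, div_le_div_iff₀ (by linarith) (by norm_num)]
    have h1 : (n:ℝ) * (S i i / n) = S i i := by field_simp
    rw [h1]
    nlinarith
  obtain ⟨hInt0, -⟩ := main_claim hn hS hXm hXi hXd hlam0 hc0
  constructor
  · exact integral_mono_of_nonneg (ae_of_all _ fun ω => norm_nonneg _)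
      (hInt0.const_mul (opNorm M))
      (ae_of_all _ fun ω => opNorm_hadamard_le M _)
  · rw [integral_const_mul]
    rcases eq_or_lt_of_le hop with hz | hpos
    · -- opNorm S = 0
      have hdiag : ∀ i, S i i ≤ 0 := fun i => (diag_le_opNorm S i).trans (le_of_eq hz.symm)
      have key : ∀ lam : ℝ, 0 < lam →
          ∫ ω, (linf ((n : ℝ)⁻¹ • ∑ k, X k ω))^2 ∂ℙ ≤ lam⁻¹ * Real.log (Real.sqrt 2 * p) := by
        intro lam hlam
        refine (main_claim hn hS hXm hXi hXd hlam fun i => ?_).2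
        have : lam * (S i i / n) ≤ 0 :=
          mul_nonpos_of_nonneg_of_nonpos hlam.le (div_nonpos_of_nonpos_of_nonneg (hdiag i) hn0.le)
        linarith
      set r : ℝ := ∫ ω, (linf ((n : ℝ)⁻¹ • ∑ k, X k ω))^2 ∂ℙ with hrdef
      have hr0 : 0 ≤ r := integral_nonneg fun ω => sq_nonneg _
      set L : ℝ := Real.log (Real.sqrt 2 * p) with hLdef
      have hL0 : 0 ≤ L := Real.log_nonneg (by nlinarith)
      have hr : r ≤ 0 := by
        by_contra hcon
        push_neg at hcon
        have hk := key ((L + 1) / r) (div_pos (by linarith) hcon)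
        rw [inv_div, div_mul_eq_mul_div] at hk
        have h2 : r * (L + 1) ≤ r * L := (le_div_iff₀ (by linarith : (0:ℝ) < L + 1)).1 hk
        nlinarith
      have hreq : r = 0 := le_antisymm hr hr0
      rw [hreq, mul_zero, ← hz]
      rw [mul_zero, zero_mul, zero_div]
    · -- opNorm S > 0
      set lam : ℝ := n / (4 * opNorm S) with hlamdef
      have hlam : 0 < lam := div_pos hn0 (by linarith)
      have hcl : ∀ i, lam * (S i i / n) ≤ 1/4 := by
        intro i
        have hd := diag_le_opNorm S i
        rw [hlamdef, div_mul_eq_mul_div, div_le_div_iff₀ (by linarith) (by norm_num)]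
        have h1 : (n:ℝ) * (S i i / n) = S i i := by field_simp
        rw [h1]
        nlinarith
      have key := (main_claim hn hS hXm hXi hXd hlam hcl).2
      have hbound : ∫ ω, (linf ((n : ℝ)⁻¹ • ∑ k, X k ω))^2 ∂ℙ
          ≤ lam⁻¹ * Real.log (2 * p) := by
        calc ∫ ω, (linf ((n : ℝ)⁻¹ • ∑ k, X k ω))^2 ∂ℙ
            ≤ lam⁻¹ * Real.log (Real.sqrt 2 * p) := key
          _ ≤ lam⁻¹ * Real.log (2 * p) :=
            mul_le_mul_of_nonneg_left hlog_le (inv_nonneg.2 hlam.le)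
      calc opNorm M * ∫ ω, (linf ((n : ℝ)⁻¹ • ∑ k, X k ω))^2 ∂ℙ
          ≤ opNorm M * (lam⁻¹ * Real.log (2 * p)) :=
            mul_le_mul_of_nonneg_left hbound (norm_nonneg _)
        _ = 4 * opNorm M * opNorm S * Real.log (2 * p) / n := by
            rw [hlamdef, inv_div]
            field_simp
end

section
/- Let A be a p × p real matrix. Then ‖A‖ ≤ 12 ⌈ln(2p)⌉² max_{x, y ∈ Reg_p} ⟨A x, y⟩, where Reg_p is the set of regular vectors of the sphere S^{p−1}. -/
open MeasureTheory ProbabilityTheory Matrix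

/-- Regular vectors of the sphere `S^{p-1}` with sparsity `s`: unit vectors all of whose
coordinates satisfy `xᵢ² ∈ {0, 1/s}`. -/
def Reg (p s : ℕ) : Set (Fin p → ℝ) :=
  {x | (∑ i, (x i) ^ 2 = 1) ∧ ∀ i, (x i) ^ 2 = 0 ∨ (x i) ^ 2 = 1 / s}

/-- The set of all regular vectors, `Reg_p = ∪_{s=1}^p Reg_p(s)`. -/
def RegAll (p : ℕ) : Set (Fin p → ℝ) := ⋃ s ∈ Finset.Icc 1 p, Reg p s

section Helpers

/-- Harmonic sum bound. -/
lemma myHarmonicLe (p : ℕ) :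
    ∑ s ∈ Finset.range p, (1 : ℝ) / (s + 1) ≤ 1 + Real.log p := by
  induction p with
  | zero => simp
  | succ n ih =>
    rw [Finset.sum_range_succ]
    rcases Nat.eq_zero_or_pos n with h | h
    · subst h; simp
    · have hn : (0:ℝ) < n := by exact_mod_cast h
      have h1 : Real.log ((n:ℝ)/(n+1)) ≤ (n:ℝ)/(n+1) - 1 :=
        Real.log_le_sub_one_of_pos (by positivity)
      rw [Real.log_div (by positivity) (by positivity)] at h1
      have h2 : (n:ℝ)/(n+1) - 1 = -(1/(n+1)) := by field_simp; ring
      push_cast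
      push_cast at ih
      linarith [h1, h2 ▸ h1]

lemma decomp {p : ℕ} (hp : 0 < p) (x : Fin p → ℝ) (hx : ∑ i, x i ^ 2 = 1) :
    ∃ c : ℕ → ℝ, ∃ u : ℕ → (Fin p → ℝ),
      (∀ s ∈ Finset.range p, 0 ≤ c s) ∧
      (∀ s ∈ Finset.range p, u s ∈ RegAll p) ∧
      x = ∑ s ∈ Finset.range p, c s • u s ∧
      (∑ s ∈ Finset.range p, c s) ^ 2 ≤ 1 + Real.log p := by
  classical
  set π : Equiv.Perm (Fin p) := Tuple.sort (fun i => -|x i|) with hπ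
  set a : ℕ → ℝ := fun s => if h : s < p then |x (π ⟨s, h⟩)| else 0 with ha
  set ε : Fin p → ℝ := fun i => if x i < 0 then -1 else 1 with hε
  set u : ℕ → Fin p → ℝ :=
    fun s i => if ((π.symm i : ℕ) ≤ s) then ε i / Real.sqrt (s+1) else 0 with hu
  set c : ℕ → ℝ := fun s => (a s - a (s+1)) * Real.sqrt (s+1) with hc
  have ha0 : ∀ s, 0 ≤ a s := by
    intro s; rw [ha]; dsimp only; split
    · exact abs_nonneg _
    · exact le_refl 0
  have hap : a p = 0 := by rw [ha]; simp
  have hmono : ∀ s, a (s+1) ≤ a s := by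
    intro s
    by_cases h : s + 1 < p
    · have hs : s < p := by omega
      rw [ha]; dsimp only
      rw [dif_pos h, dif_pos hs]
      have hle : (⟨s, hs⟩ : Fin p) ≤ ⟨s+1, h⟩ := by simp [Fin.le_def]
      have := Tuple.monotone_sort (fun i => -|x i|) hle
      simp only [Function.comp_apply] at this
      rw [hπ]
      linarith [this]
    · have : a (s+1) = 0 := by rw [ha]; simp [h]
      rw [this]; exact ha0 s
  have hεx : ∀ i, ε i * |x i| = x i := by
    intro i; rw [hε]; dsimp only; split_ifs with h
    · rw [abs_of_neg h]; ring
    · rw [abs_of_nonneg (not_lt.mp h)]; ring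
  have hε2 : ∀ i, ε i ^ 2 = 1 := by
    intro i; rw [hε]; dsimp only; split <;> norm_num
  have hsq : ∀ s i, (u s i) ^ 2 = if ((π.symm i : ℕ) ≤ s) then 1/((s:ℝ)+1) else 0 := by
    intro s i; rw [hu]; dsimp only; split
    · rw [div_pow, hε2, Real.sq_sqrt (by positivity)]
    · simp
  have hcount : ∀ s, s < p →
      (∑ i : Fin p, (if ((π.symm i : ℕ) ≤ s) then (1:ℝ)/((s:ℝ)+1) else 0)) = 1 := by
    intro s hs
    rw [← Equiv.sum_comp π
      (fun i => if ((π.symm i : ℕ) ≤ s) then (1:ℝ)/((s:ℝ)+1) else 0)]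
    simp only [Equiv.symm_apply_apply]
    rw [Fin.sum_univ_eq_sum_range (fun j => if j ≤ s then (1:ℝ)/((s:ℝ)+1) else 0) p]
    rw [← Finset.sum_filter]
    have hfil : (Finset.range p).filter (fun j => j ≤ s) = Finset.range (s+1) := by
      ext j; simp; omega
    rw [hfil, Finset.sum_const, Finset.card_range, nsmul_eq_mul]
    push_cast
    field_simp
  have hureg : ∀ s, s < p → u s ∈ Reg p (s+1) := by
    intro s hs
    constructor
    · rw [show (∑ i, (u s i)^2) = ∑ i : Fin p,
        (if ((π.symm i : ℕ) ≤ s) then (1:ℝ)/((s:ℝ)+1) else 0) from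
        Finset.sum_congr rfl (fun i _ => hsq s i)]
      exact hcount s hs
    · intro i
      rw [hsq s i]
      split
      · right; push_cast; ring
      · left; rfl
  have huregall : ∀ s ∈ Finset.range p, u s ∈ RegAll p := by
    intro s hs
    rw [Finset.mem_range] at hs
    exact Set.mem_biUnion (by simp; omega : s+1 ∈ Finset.Icc 1 p) (hureg s hs)
  have hcnn : ∀ s ∈ Finset.range p, 0 ≤ c s := by
    intro s _
    exact mul_nonneg (by linarith [hmono s]) (Real.sqrt_nonneg _)
  refine ⟨c, u, hcnn, huregall, ?_, ?_⟩
  · -- decomposition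
    funext i
    have hri : ((π.symm i : ℕ)) < p := (π.symm i).isLt
    rw [Finset.sum_apply]
    have hterm : ∀ s, (c s • u s) i =
        if ((π.symm i : ℕ) ≤ s) then (a s - a (s+1)) * ε i else 0 := by
      intro s
      rw [Pi.smul_apply, smul_eq_mul, hc, hu]
      dsimp only
      split
      · rw [div_eq_mul_inv]
        have hsne : Real.sqrt ((s:ℝ)+1) ≠ 0 := by positivity
        field_simp
      · ring
    rw [Finset.sum_congr rfl (fun s _ => hterm s), ← Finset.sum_filter]
    have hfil : (Finset.range p).filter (fun s => (π.symm i : ℕ) ≤ s)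
        = Finset.Ico (π.symm i : ℕ) p := by
      ext j; simp; omega
    rw [hfil, ← Finset.sum_mul,
      Finset.sum_Ico_eq_sub (fun s => a s - a (s+1)) hri.le,
      Finset.sum_range_sub' a, Finset.sum_range_sub' a, hap]
    have hai : a (π.symm i : ℕ) = |x i| := by
      rw [ha]; dsimp only; rw [dif_pos hri]
      congr 1
      rw [show (⟨(π.symm i : ℕ), hri⟩ : Fin p) = π.symm i from Fin.eta _ _]
      exact congrArg x (π.apply_symm_apply i)
    rw [hai]
    ring_nf
    rw [mul_comm]
    exact (hεx i).symm
  · -- sum bound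
    have hshift : ∑ s ∈ Finset.range p, a (s+1) * Real.sqrt ((s:ℝ)+1)
        = ∑ s ∈ Finset.range p, a s * Real.sqrt s := by
      have h1 : ∑ s ∈ Finset.range (p+1), a s * Real.sqrt s
          = (∑ s ∈ Finset.range p, a (s+1) * Real.sqrt ((s:ℝ)+1)) + a 0 * Real.sqrt 0 := by
        rw [Finset.sum_range_succ' (fun s => a s * Real.sqrt s) p]
        push_cast; ring_nf
      have h2 : ∑ s ∈ Finset.range (p+1), a s * Real.sqrt s
          = (∑ s ∈ Finset.range p, a s * Real.sqrt s) + a p * Real.sqrt p :=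
        Finset.sum_range_succ _ p
      rw [hap] at h2
      simp only [Real.sqrt_zero, mul_zero, zero_mul, add_zero] at h1 h2
      linarith
    have habel : ∑ s ∈ Finset.range p, c s
        = ∑ s ∈ Finset.range p, a s * (Real.sqrt ((s:ℝ)+1) - Real.sqrt s) := by
      simp only [hc, sub_mul, mul_sub]
      rw [Finset.sum_sub_distrib, hshift, ← Finset.sum_sub_distrib]
    have hsqrtdiff : ∀ s : ℕ, Real.sqrt ((s:ℝ)+1) - Real.sqrt s ≤ 1 / Real.sqrt ((s:ℝ)+1) := by
      intro s
      have hpos : (0:ℝ) < Real.sqrt ((s:ℝ)+1) := by positivity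
      rw [le_div_iff₀ hpos]
      have h2 : Real.sqrt ((s:ℝ)+1) * Real.sqrt ((s:ℝ)+1) = (s:ℝ)+1 :=
        Real.mul_self_sqrt (by positivity)
      have h3 : Real.sqrt (s:ℝ) * Real.sqrt (s:ℝ) = (s:ℝ) :=
        Real.mul_self_sqrt (by positivity)
      have h4 : Real.sqrt (s:ℝ) * Real.sqrt (s:ℝ) ≤ Real.sqrt (s:ℝ) * Real.sqrt ((s:ℝ)+1) :=
        mul_le_mul_of_nonneg_left (Real.sqrt_le_sqrt (by linarith)) (Real.sqrt_nonneg _)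
      nlinarith
    have hstep : ∑ s ∈ Finset.range p, c s
        ≤ ∑ s ∈ Finset.range p, a s * (1 / Real.sqrt ((s:ℝ)+1)) := by
      rw [habel]
      exact Finset.sum_le_sum fun s _ =>
        mul_le_mul_of_nonneg_left (hsqrtdiff s) (ha0 s)
    have hcs : (∑ s ∈ Finset.range p, a s * (1 / Real.sqrt ((s:ℝ)+1))) ^ 2
        ≤ (∑ s ∈ Finset.range p, a s ^ 2) * ∑ s ∈ Finset.range p, (1 / Real.sqrt ((s:ℝ)+1)) ^ 2 :=
      Finset.sum_mul_sq_le_sq_mul_sq _ _ _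
    have hasq : ∑ s ∈ Finset.range p, a s ^ 2 = 1 := by
      rw [← Fin.sum_univ_eq_sum_range (fun s => a s ^ 2) p]
      have : ∀ s : Fin p, a (s : ℕ) ^ 2 = x (π s) ^ 2 := by
        intro s
        rw [ha]; dsimp only; rw [dif_pos s.isLt, Fin.eta, sq_abs]
      rw [Finset.sum_congr rfl (fun s _ => this s)]
      rw [Equiv.sum_comp π (fun i => x i ^ 2)]
      exact hx
    have hinv : ∀ s : ℕ, (1 / Real.sqrt ((s:ℝ)+1)) ^ 2 = 1 / ((s:ℝ)+1) := by
      intro s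
      rw [div_pow, one_pow, Real.sq_sqrt (by positivity)]
    have hH : ∑ s ∈ Finset.range p, (1 / Real.sqrt ((s:ℝ)+1)) ^ 2 ≤ 1 + Real.log p := by
      rw [Finset.sum_congr rfl (fun s _ => hinv s)]
      exact myHarmonicLe p
    have hSCnn : 0 ≤ ∑ s ∈ Finset.range p, c s := Finset.sum_nonneg hcnn
    have hTnn : 0 ≤ ∑ s ∈ Finset.range p, a s * (1 / Real.sqrt ((s:ℝ)+1)) :=
      Finset.sum_nonneg fun s _ => mul_nonneg (ha0 s) (by positivity)
    calc (∑ s ∈ Finset.range p, c s) ^ 2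
        ≤ (∑ s ∈ Finset.range p, a s * (1 / Real.sqrt ((s:ℝ)+1))) ^ 2 :=
          pow_le_pow_left₀ hSCnn hstep 2
      _ ≤ (∑ s ∈ Finset.range p, a s ^ 2) * ∑ s ∈ Finset.range p, (1 / Real.sqrt ((s:ℝ)+1)) ^ 2 := hcs
      _ ≤ 1 + Real.log p := by rw [hasq, one_mul]; exact hH

lemma sum_dotProduct'' {p : ℕ} (F : Finset ℕ) (f : ℕ → (Fin p → ℝ)) (w : Fin p → ℝ) :
    (∑ s ∈ F, f s) ⬝ᵥ w = ∑ s ∈ F, f s ⬝ᵥ w := by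
  simp only [dotProduct, Finset.sum_apply, Finset.sum_mul]
  exact Finset.sum_comm

lemma dotProduct_sum'' {p : ℕ} (F : Finset ℕ) (v : Fin p → ℝ) (g : ℕ → (Fin p → ℝ)) :
    v ⬝ᵥ (∑ r ∈ F, g r) = ∑ r ∈ F, v ⬝ᵥ g r := by
  simp only [dotProduct, Finset.sum_apply, Finset.mul_sum]
  exact Finset.sum_comm

lemma mulVec_sum'' {p : ℕ} (A : Matrix (Fin p) (Fin p) ℝ) (F : Finset ℕ) (f : ℕ → Fin p → ℝ) :
    A.mulVec (∑ s ∈ F, f s) = ∑ s ∈ F, A.mulVec (f s) := by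
  simp only [← Matrix.mulVecLin_apply]
  exact map_sum A.mulVecLin f F

lemma regAll_unit {p : ℕ} {u : Fin p → ℝ} (h : u ∈ RegAll p) : ∑ i, u i ^ 2 = 1 := by
  obtain ⟨s, hs, h1⟩ := Set.mem_iUnion₂.mp h
  exact h1.1

lemma regAll_neg {p : ℕ} {u : Fin p → ℝ} (h : u ∈ RegAll p) : -u ∈ RegAll p := by
  obtain ⟨s, hs, h1, h2⟩ := Set.mem_iUnion₂.mp h
  refine Set.mem_iUnion₂.mpr ⟨s, hs, ?_, ?_⟩
  · simpa using h1
  · intro i; simpa using h2 i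

lemma e1_mem {p : ℕ} (hp : 0 < p) :
    (fun i => if i = (⟨0, hp⟩ : Fin p) then (1:ℝ) else 0) ∈ RegAll p := by
  refine Set.mem_iUnion₂.mpr ⟨1, Finset.mem_Icc.mpr ⟨le_refl 1, hp⟩, ?_, ?_⟩
  · have h : ∀ i : Fin p, ((if i = (⟨0, hp⟩ : Fin p) then (1:ℝ) else 0)) ^ 2
        = if i = (⟨0, hp⟩ : Fin p) then (1:ℝ) else 0 := by
      intro i; split <;> norm_num
    rw [Finset.sum_congr rfl (fun i _ => h i), Finset.sum_ite_eq' Finset.univ]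
    simp
  · intro i; dsimp only; split
    · right; norm_num
    · left; norm_num

end Helpers

/-- **Computing the operator norm on regular vectors.**
`‖A‖ ≤ 12 ⌈ln(2p)⌉² max_{x,y ∈ Reg_p} ⟨Ax, y⟩`. -/
theorem opNorm_le_of_regular
    (p : ℕ) (hp : 0 < p) (A : Matrix (Fin p) (Fin p) ℝ) :
    opNorm A ≤ 12 * (⌈Real.log (2 * p)⌉₊ : ℝ) ^ 2 *
      sSup {r : ℝ | ∃ x ∈ RegAll p, ∃ y ∈ RegAll p, r = A.mulVec x ⬝ᵥ y} := by
  classical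
  set S : Set ℝ := {r : ℝ | ∃ x ∈ RegAll p, ∃ y ∈ RegAll p, r = A.mulVec x ⬝ᵥ y} with hS
  set M : ℝ := sSup S with hM
  -- S is bounded above
  have hbdd : BddAbove S := by
    refine ⟨∑ i, ∑ j, |A i j|, ?_⟩
    rintro r ⟨u, hu, w, hw, rfl⟩
    have habs : ∀ (z : Fin p → ℝ), z ∈ RegAll p → ∀ j, |z j| ≤ 1 := by
      intro z hz j
      have h1 : z j ^ 2 ≤ 1 := by
        rw [← regAll_unit hz]
        exact Finset.single_le_sum (fun i _ => sq_nonneg (z i)) (Finset.mem_univ j)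
      exact (sq_le_one_iff_abs_le_one (a := z j)).mp h1
    calc A.mulVec u ⬝ᵥ w ≤ |A.mulVec u ⬝ᵥ w| := le_abs_self _
      _ ≤ ∑ i, |A.mulVec u i * w i| := Finset.abs_sum_le_sum_abs _ _
      _ ≤ ∑ i, ∑ j, |A i j| := by
        refine Finset.sum_le_sum fun i _ => ?_
        rw [abs_mul]
        have h1 : |A.mulVec u i| ≤ ∑ j, |A i j| := by
          rw [show A.mulVec u i = ∑ j, A i j * u j from rfl]
          refine (Finset.abs_sum_le_sum_abs _ _).trans (Finset.sum_le_sum fun j _ => ?_)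
          rw [abs_mul]
          exact mul_le_of_le_one_right (abs_nonneg _) (habs u hu j)
        calc |A.mulVec u i| * |w i| ≤ (∑ j, |A i j|) * 1 :=
              mul_le_mul h1 (habs w hw i) (abs_nonneg _)
                (Finset.sum_nonneg fun j _ => abs_nonneg _)
          _ = ∑ j, |A i j| := mul_one _
  -- M is nonnegative
  set e : Fin p → ℝ := fun i => if i = (⟨0, hp⟩ : Fin p) then (1:ℝ) else 0 with he
  have heMem : e ∈ RegAll p := e1_mem hp
  have hM0 : 0 ≤ M := by
    have h1 : A.mulVec e ⬝ᵥ e ≤ M := le_csSup hbdd ⟨e, heMem, e, heMem, rfl⟩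
    have h2 : -(A.mulVec e ⬝ᵥ e) ≤ M := by
      refine le_csSup hbdd ⟨-e, regAll_neg heMem, e, heMem, ?_⟩
      rw [Matrix.mulVec_neg, neg_dotProduct]
    linarith
  have hlogp : 0 ≤ Real.log p := Real.log_nonneg (by exact_mod_cast hp)
  -- the key pairing bound
  have key : ∀ x y : Fin p → ℝ, (∑ i, x i ^ 2 = 1) → (∑ i, y i ^ 2 = 1) →
      A.mulVec x ⬝ᵥ y ≤ (1 + Real.log p) * M := by
    intro x y hx hy
    obtain ⟨c, u, hc, hu, hxd, hcs⟩ := decomp hp x hx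
    obtain ⟨d, w, hd, hw, hyd, hds⟩ := decomp hp y hy
    rw [hxd, hyd]
    have hbil : A.mulVec (∑ s ∈ Finset.range p, c s • u s) ⬝ᵥ
        (∑ r ∈ Finset.range p, d r • w r)
        = ∑ s ∈ Finset.range p, ∑ r ∈ Finset.range p,
            (c s * d r) * (A.mulVec (u s) ⬝ᵥ w r) := by
      rw [mulVec_sum'', sum_dotProduct'']
      refine Finset.sum_congr rfl fun s _ => ?_
      rw [Matrix.mulVec_smul, smul_dotProduct, dotProduct_sum'', smul_eq_mul, Finset.mul_sum]
      refine Finset.sum_congr rfl fun r _ => ?_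
      rw [dotProduct_smul, smul_eq_mul]; ring
    rw [hbil]
    have hstep : ∑ s ∈ Finset.range p, ∑ r ∈ Finset.range p,
        (c s * d r) * (A.mulVec (u s) ⬝ᵥ w r)
        ≤ ∑ s ∈ Finset.range p, ∑ r ∈ Finset.range p, (c s * d r) * M := by
      refine Finset.sum_le_sum fun s hs => Finset.sum_le_sum fun r hr => ?_
      refine mul_le_mul_of_nonneg_left ?_ (mul_nonneg (hc s hs) (hd r hr))
      exact le_csSup hbdd ⟨u s, hu s hs, w r, hw r hr, rfl⟩
    refine hstep.trans ?_
    have hfact : ∑ s ∈ Finset.range p, ∑ r ∈ Finset.range p, (c s * d r) * M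
        = (∑ s ∈ Finset.range p, c s) * (∑ r ∈ Finset.range p, d r) * M := by
      rw [Finset.sum_mul_sum, Finset.sum_mul]
      refine Finset.sum_congr rfl fun s _ => ?_
      rw [Finset.sum_mul]
    rw [hfact]
    refine mul_le_mul_of_nonneg_right ?_ hM0
    have hcnn : 0 ≤ ∑ s ∈ Finset.range p, c s := Finset.sum_nonneg hc
    have hdnn : 0 ≤ ∑ r ∈ Finset.range p, d r := Finset.sum_nonneg hd
    nlinarith [sq_nonneg ((∑ s ∈ Finset.range p, c s) - (∑ r ∈ Finset.range p, d r))]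
  -- operator norm bound
  have hop : opNorm A ≤ (1 + Real.log p) * M := by
    unfold opNorm
    refine ContinuousLinearMap.opNorm_le_bound _
      (mul_nonneg (by linarith) hM0) fun v => ?_
    by_cases hv : v = 0
    · simp [hv]
    have hvn : 0 < ‖v‖ := norm_pos_iff.mpr hv
    set T := Matrix.toEuclideanCLM (𝕜 := ℝ) (n := Fin p) A with hT
    by_cases hTv : T v = 0
    · rw [hTv]
      simp only [norm_zero]
      positivity
    have hTvn : 0 < ‖T v‖ := norm_pos_iff.mpr hTv
    have hnorm_eq : ∀ z : EuclideanSpace ℝ (Fin p), ‖z‖ ^ 2 = ∑ i, z i ^ 2 := by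
      intro z
      rw [EuclideanSpace.norm_eq, Real.sq_sqrt (by positivity)]
      refine Finset.sum_congr rfl fun i _ => ?_
      rw [Real.norm_eq_abs, sq_abs]
    set x : Fin p → ℝ := fun i => v i / ‖v‖ with hxdef
    set y : Fin p → ℝ := fun i => T v i / ‖T v‖ with hydef
    have hx : ∑ i, x i ^ 2 = 1 := by
      simp only [hxdef, div_pow, ← Finset.sum_div, ← hnorm_eq v]
      exact div_self (by positivity)
    have hy : ∑ i, y i ^ 2 = 1 := by
      simp only [hydef, div_pow, ← Finset.sum_div, ← hnorm_eq (T v)]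
      exact div_self (by positivity)
    have hmulVec : A.mulVec (WithLp.equiv 2 (Fin p → ℝ) v) = WithLp.equiv 2 _ (T v) := by
      rw [hT, WithLp.equiv_apply, WithLp.equiv_apply, Matrix.ofLp_toEuclideanCLM]
    have hAx : A.mulVec x = fun i => T v i / ‖v‖ := by
      have hxs : x = ‖v‖⁻¹ • (WithLp.equiv 2 (Fin p → ℝ) v) := by
        funext i
        simp [hxdef, div_eq_inv_mul, WithLp.equiv_apply]
      rw [hxs, Matrix.mulVec_smul, hmulVec]
      funext i
      simp [WithLp.equiv_apply, div_eq_inv_mul]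
    have hdot : A.mulVec x ⬝ᵥ y = ‖T v‖ / ‖v‖ := by
      rw [hAx]
      simp only [dotProduct, hydef]
      have hterm : ∀ i, T v i / ‖v‖ * (T v i / ‖T v‖) = T v i ^ 2 / (‖v‖ * ‖T v‖) := by
        intro i; ring
      rw [Finset.sum_congr rfl fun i _ => hterm i, ← Finset.sum_div, ← hnorm_eq (T v)]
      rw [pow_two]
      field_simp
    have := key x y hx hy
    rw [hdot, div_le_iff₀ hvn] at this
    linarith [this]
  -- arithmetic on the constant
  refine hop.trans ?_
  refine mul_le_mul_of_nonneg_right ?_ hM0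
  set cc : ℝ := (⌈Real.log (2 * p)⌉₊ : ℝ) with hcc
  have h2p : (1:ℝ) < 2 * p := by
    have : (1:ℝ) ≤ (p:ℝ) := by exact_mod_cast hp
    linarith
  have hlogpos : 0 < Real.log (2 * p) := Real.log_pos h2p
  have hc1 : (1:ℝ) ≤ cc := by
    rw [hcc]
    have h1 : (1:ℕ) ≤ ⌈Real.log (2 * (p:ℝ))⌉₊ := Nat.ceil_pos.mpr hlogpos
    exact_mod_cast h1
  have hc2 : Real.log (2 * p) ≤ cc := Nat.le_ceil _
  have hlp : Real.log p ≤ Real.log (2 * p) := by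
    have hple : (p:ℝ) ≤ 2 * p := by
      have : (0:ℝ) ≤ (p:ℝ) := by positivity
      linarith
    exact Real.log_le_log (by exact_mod_cast hp) hple
  nlinarith [mul_nonneg (sub_nonneg.mpr hc1) (sub_nonneg.mpr hc1), hc1, hc2, hlp]
end

section
/- Let A be a random p × p real matrix such that A and its transpose A^T are identically distributed. Then for every t ≥ 0, P{ ‖A‖ ≥ t } ≤ 2 P{ 12 ⌈ln(2p)⌉² · max over pairs r ≤ s in {1,...,p} of max_{x ∈ Reg_p(r), y ∈ Reg_p(s)} ⟨A x, y⟩ ≥ t }. -/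
open MeasureTheory ProbabilityTheory Matrix

/-- Matrices over ℝ carry the product measurable structure (entrywise). -/
instance matrixMeasurableSpace {p : ℕ} : MeasurableSpace (Matrix (Fin p) (Fin p) ℝ) :=
  MeasurableSpace.pi (δ := Fin p) (X := fun _ => Fin p → ℝ)

namespace OpAux


variable {p : ℕ}

def MSet (p : ℕ) (B : Matrix (Fin p) (Fin p) ℝ) : Set ℝ :=
  {v : ℝ | ∃ r ∈ Finset.Icc 1 p, ∃ s ∈ Finset.Icc 1 p, r ≤ s ∧
      ∃ x ∈ Reg p r, ∃ y ∈ Reg p s, v = B.mulVec x ⬝ᵥ y}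

/-- the pairing as a double sum -/
lemma pair_eq_sum_left (B : Matrix (Fin p) (Fin p) ℝ) (z w : Fin p → ℝ) :
    B.mulVec z ⬝ᵥ w = ∑ i, (Bᵀ.mulVec w) i * z i := by
  simp only [Matrix.mulVec, dotProduct, Matrix.transpose_apply,
    Finset.sum_mul, Finset.mul_sum]
  rw [Finset.sum_comm]
  apply Finset.sum_congr rfl; intro i _
  apply Finset.sum_congr rfl; intro j _
  ring

lemma pair_transpose (B : Matrix (Fin p) (Fin p) ℝ) (u v : Fin p → ℝ) :
    Bᵀ.mulVec v ⬝ᵥ u = B.mulVec u ⬝ᵥ v := by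
  rw [pair_eq_sum_left B u v]
  rfl

/-- Sign vector lemma: one-sided linearization. -/
lemma sign_lemma (h : Fin p → ℝ) (S : Finset (Fin p)) (hS : S.Nonempty)
    (c : ℝ) (hc : 0 ≤ c) (z : Fin p → ℝ)
    (hz0 : ∀ i, i ∉ S → z i = 0) (hzc : ∀ i, |z i| ≤ c) :
    ∃ u ∈ Reg p S.card, (∑ i, h i * z i ≤ c * Real.sqrt S.card * ∑ i, h i * u i)
      ∧ 0 ≤ ∑ i, h i * u i := by
  set s : ℝ := (S.card : ℝ) with hs
  have hs0 : 0 < s := by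
    have := hS.card_pos; positivity
  have hrs : Real.sqrt s > 0 := Real.sqrt_pos.2 hs0
  have hsq : Real.sqrt s ^ 2 = s := Real.sq_sqrt hs0.le
  refine ⟨fun i => if i ∈ S then (if 0 ≤ h i then (1:ℝ) else -1) / Real.sqrt s else 0,
      ⟨?_, ?_⟩, ?_, ?_⟩
  · rw [← Finset.sum_subset (Finset.subset_univ S)]
    · rw [Finset.sum_congr rfl (g := fun _ => 1/s)]
      · rw [Finset.sum_const, hs, nsmul_eq_mul]; field_simp
      · intro i hi; simp only [if_pos hi]
        rw [div_pow, hsq]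
        by_cases h0 : 0 ≤ h i <;> simp [h0]
    · intro i _ hi; simp [hi]
  · intro i
    by_cases hi : i ∈ S
    · right; simp only [if_pos hi]
      rw [div_pow, hsq]
      by_cases h0 : 0 ≤ h i <;> simp [h0, hs]
    · left; simp [hi]
  · have key : ∀ i ∈ S, h i * ((if 0 ≤ h i then (1:ℝ) else -1) / Real.sqrt s) =
        |h i| / Real.sqrt s := by
      intro i _
      by_cases h0 : 0 ≤ h i
      · rw [if_pos h0, abs_of_nonneg h0]; ring
      · rw [if_neg h0, abs_of_neg (lt_of_not_ge h0)]; ring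
    have hsum : ∑ i, h i * (if i ∈ S then (if 0 ≤ h i then (1:ℝ) else -1) / Real.sqrt s else 0)
        = ∑ i ∈ S, |h i| / Real.sqrt s := by
      rw [← Finset.sum_subset (Finset.subset_univ S)]
      · exact Finset.sum_congr rfl (fun i hi => by rw [if_pos hi]; exact key i hi)
      · intro i _ hi; simp [hi]
    rw [hsum]
    calc ∑ i, h i * z i = ∑ i ∈ S, h i * z i := by
          rw [← Finset.sum_subset (Finset.subset_univ S)]
          intro i _ hi; simp [hz0 i hi]
      _ ≤ ∑ i ∈ S, c * |h i| := by
          apply Finset.sum_le_sum; intro i _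
          calc h i * z i ≤ |h i * z i| := le_abs_self _
            _ = |h i| * |z i| := abs_mul _ _
            _ ≤ |h i| * c := by
                exact mul_le_mul_of_nonneg_left (hzc i) (abs_nonneg _)
            _ = c * |h i| := mul_comm _ _
      _ = c * Real.sqrt s * ∑ i ∈ S, |h i| / Real.sqrt s := by
          rw [Finset.mul_sum]
          apply Finset.sum_congr rfl; intro i _
          field_simp
  · have : ∑ i, h i * (if i ∈ S then (if 0 ≤ h i then (1:ℝ) else -1) / Real.sqrt s else 0)
        = ∑ i ∈ S, |h i| / Real.sqrt s := by
      rw [← Finset.sum_subset (Finset.subset_univ S)]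
      · apply Finset.sum_congr rfl; intro i hi
        rw [if_pos hi]
        by_cases h0 : 0 ≤ h i
        · rw [if_pos h0, abs_of_nonneg h0]; ring
        · rw [if_neg h0, abs_of_neg (lt_of_not_ge h0)]; ring
      · intro i _ hi; simp [hi]
    rw [this]
    positivity


lemma Reg.abs_le_one {s : ℕ} {x : Fin p → ℝ} (hx : x ∈ Reg p s) (i : Fin p) : |x i| ≤ 1 := by
  have h1 : (x i)^2 ≤ 1 := by
    rw [← hx.1]
    exact Finset.single_le_sum (f := fun i => (x i)^2) (fun j _ => sq_nonneg _) (Finset.mem_univ i)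
  nlinarith [abs_nonneg (x i), sq_abs (x i)]

lemma Reg.neg {s : ℕ} {x : Fin p → ℝ} (hx : x ∈ Reg p s) : -x ∈ Reg p s := by
  constructor
  · simpa [neg_sq] using hx.1
  · intro i; simpa [neg_sq] using hx.2 i

lemma pair_abs_le {B : Matrix (Fin p) (Fin p) ℝ} {x y : Fin p → ℝ}
    (hx : ∀ i, |x i| ≤ 1) (hy : ∀ i, |y i| ≤ 1) :
    |B.mulVec x ⬝ᵥ y| ≤ ∑ j, ∑ i, |B j i| := by
  calc |B.mulVec x ⬝ᵥ y| ≤ ∑ j, |(B.mulVec x) j * y j| := Finset.abs_sum_le_sum_abs _ _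
    _ ≤ ∑ j, ∑ i, |B j i| := by
        apply Finset.sum_le_sum; intro j _
        rw [abs_mul]
        calc |(B.mulVec x) j| * |y j| ≤ |(B.mulVec x) j| * 1 :=
              mul_le_mul_of_nonneg_left (hy j) (abs_nonneg _)
          _ = |∑ i, B j i * x i| := by rw [mul_one]; rfl
          _ ≤ ∑ i, |B j i * x i| := Finset.abs_sum_le_sum_abs _ _
          _ ≤ ∑ i, |B j i| := by
              apply Finset.sum_le_sum; intro i _
              rw [abs_mul]
              calc |B j i| * |x i| ≤ |B j i| * 1 :=
                    mul_le_mul_of_nonneg_left (hx i) (abs_nonneg _)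
                _ = |B j i| := mul_one _

lemma MSet_bddAbove (B : Matrix (Fin p) (Fin p) ℝ) : BddAbove (MSet p B) := by
  refine ⟨∑ j, ∑ i, |B j i|, ?_⟩
  rintro v ⟨r, _, s, _, _, x, hx, y, hy, rfl⟩
  exact le_trans (le_abs_self _) (pair_abs_le (Reg.abs_le_one hx) (Reg.abs_le_one hy))

lemma const_mem_Reg (hp : 0 < p) : (fun _ : Fin p => 1 / Real.sqrt p) ∈ Reg p p := by
  have hp' : (0:ℝ) < p := by exact_mod_cast hp
  have hsq : Real.sqrt p ^ 2 = (p:ℝ) := Real.sq_sqrt hp'.le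
  constructor
  · rw [Finset.sum_const, Finset.card_univ, Fintype.card_fin]
    rw [div_pow, one_pow, hsq]
    rw [nsmul_eq_mul]; field_simp
  · intro i; right; rw [div_pow, one_pow, hsq]

lemma MSet_nonempty (hp : 0 < p) (B : Matrix (Fin p) (Fin p) ℝ) : (MSet p B).Nonempty := by
  refine ⟨_, p, ?_, p, ?_, le_refl p, _, const_mem_Reg hp, _, const_mem_Reg hp, rfl⟩ <;>
    simp [Finset.mem_Icc, hp, Nat.one_le_iff_ne_zero, hp.ne']

lemma MSet_sSup_nonneg (hp : 0 < p) (B : Matrix (Fin p) (Fin p) ℝ) : 0 ≤ sSup (MSet p B) := by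
  obtain ⟨v, hv⟩ := MSet_nonempty hp B
  obtain ⟨r, hr, s, hs, hrs, x, hx, y, hy, rfl⟩ := hv
  have h1 : B.mulVec x ⬝ᵥ y ≤ sSup (MSet p B) :=
    le_csSup (MSet_bddAbove B) ⟨r, hr, s, hs, hrs, x, hx, y, hy, rfl⟩
  have h2 : -(B.mulVec x ⬝ᵥ y) ≤ sSup (MSet p B) := by
    apply le_csSup (MSet_bddAbove B)
    exact ⟨r, hr, s, hs, hrs, x, hx, -y, Reg.neg hy, by simp⟩
  linarith


/-- level function -/
noncomputable def lvl (K : ℕ) (x : Fin p → ℝ) (i : Fin p) : ℕ :=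
  if x i = 0 then K else min K (⌊-Real.log |x i|⌋₊ + 1)

lemma lvl_mem {K : ℕ} (hK : 1 ≤ K) (x : Fin p → ℝ) (i : Fin p) :
    lvl K x i ∈ Finset.Icc 1 K := by
  unfold lvl
  by_cases h : x i = 0 <;> simp [h, Finset.mem_Icc, hK, Nat.succ_le_iff]

lemma abs_le_exp_lvl {K : ℕ} {x : Fin p → ℝ} {i : Fin p} (hxi : |x i| ≤ 1) :
    |x i| ≤ Real.exp (1 - (lvl K x i : ℝ)) := by
  unfold lvl
  by_cases h : x i = 0
  · simp [h, Real.exp_pos _ |>.le]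
  · rw [if_neg h]
    have habs : 0 < |x i| := abs_pos.2 h
    set L : ℝ := -Real.log |x i| with hL
    have hL0 : 0 ≤ L := by
      rw [hL, neg_nonneg]
      exact Real.log_nonpos habs.le hxi
    have hfl : (⌊L⌋₊ : ℝ) ≤ L := Nat.floor_le hL0
    have hmin : ((min K (⌊L⌋₊ + 1) : ℕ) : ℝ) ≤ (⌊L⌋₊ : ℝ) + 1 := by
      exact_mod_cast le_trans (min_le_right _ _) (le_refl _)
    have : |x i| = Real.exp (-L) := by
      rw [hL, neg_neg, Real.exp_log habs]
    rw [this]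
    apply Real.exp_le_exp.2
    linarith

lemma exp_lt_abs_lvl {K : ℕ} {x : Fin p → ℝ} {i : Fin p} (hlt : lvl K x i < K) :
    Real.exp (-(lvl K x i : ℝ)) < |x i| := by
  unfold lvl at *
  by_cases h : x i = 0
  · rw [if_pos h] at hlt; exact absurd hlt (lt_irrefl _)
  · rw [if_neg h] at hlt ⊢
    have habs : 0 < |x i| := abs_pos.2 h
    set L : ℝ := -Real.log |x i| with hL
    have hmin : min K (⌊L⌋₊ + 1) = ⌊L⌋₊ + 1 := by
      rcases min_cases K (⌊L⌋₊ + 1) with ⟨h1, h2⟩ | ⟨h1, h2⟩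
      · omega
      · exact min_eq_right h2.le
    rw [hmin]
    have hLlt : L < (⌊L⌋₊ : ℝ) + 1 := Nat.lt_floor_add_one L
    have : |x i| = Real.exp (-L) := by rw [hL, neg_neg, Real.exp_log habs]
    rw [this]
    apply Real.exp_lt_exp.2
    push_cast
    linarith

lemma sum_dotProduct' (s : Finset ℕ) (u : ℕ → Fin p → ℝ) (v : Fin p → ℝ) :
    (∑ k ∈ s, u k) ⬝ᵥ v = ∑ k ∈ s, u k ⬝ᵥ v := by
  simp [dotProduct, Finset.sum_apply, Finset.sum_mul]
  rw [Finset.sum_comm]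

lemma dotProduct_sum' (s : Finset ℕ) (u : Fin p → ℝ) (v : ℕ → Fin p → ℝ) :
    u ⬝ᵥ (∑ k ∈ s, v k) = ∑ k ∈ s, u ⬝ᵥ v k := by
  simp [dotProduct, Finset.sum_apply, Finset.mul_sum]
  rw [Finset.sum_comm]

lemma mulVec_sum' (B : Matrix (Fin p) (Fin p) ℝ) (s : Finset ℕ) (f : ℕ → Fin p → ℝ) :
    B.mulVec (∑ k ∈ s, f k) = ∑ k ∈ s, B.mulVec (f k) := by
  exact Matrix.mulVec_sum B s f

lemma reg_pair_le (hp : 0 < p) (B : Matrix (Fin p) (Fin p) ℝ) {a b : ℕ}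
    (ha : a ∈ Finset.Icc 1 p) (hb : b ∈ Finset.Icc 1 p)
    {u v : Fin p → ℝ} (hu : u ∈ Reg p a) (hv : v ∈ Reg p b) :
    B.mulVec u ⬝ᵥ v ≤ max (sSup (MSet p B)) (sSup (MSet p Bᵀ)) := by
  rcases le_or_gt a b with hab | hab
  · exact le_max_of_le_left (le_csSup (MSet_bddAbove B)
      ⟨a, ha, b, hb, hab, u, hu, v, hv, rfl⟩)
  · have : B.mulVec u ⬝ᵥ v = Bᵀ.mulVec v ⬝ᵥ u := (pair_transpose B u v).symm
    rw [this]
    exact le_max_of_le_right (le_csSup (MSet_bddAbove Bᵀ)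
      ⟨b, hb, a, ha, hab.le, v, hv, u, hu, rfl⟩)

lemma coeff_le (hp : 0 < p) {K : ℕ} (hK1 : 1 ≤ K) (hexpK : 2*(p:ℝ) ≤ Real.exp K)
    {x : Fin p → ℝ} (hx : ∑ i, x i ^ 2 = 1) {k : ℕ} (hk : k ∈ Finset.Icc 1 K) :
    Real.exp (1 - (k:ℝ)) *
      Real.sqrt ((Finset.univ.filter (fun i => lvl K x i = k)).card) ≤ Real.exp 1 := by
  set S := Finset.univ.filter (fun i => lvl K x i = k) with hS
  have hcard : ((S.card : ℝ)) ≤ Real.exp (k:ℝ) ^ 2 := by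
    rcases lt_or_eq_of_le (Finset.mem_Icc.1 hk).2 with hkK | hkK
    · -- every i in S has exp(-k) < |x i|
      have hterm : ∀ i ∈ S, Real.exp (-(k:ℝ)) ^ 2 ≤ x i ^ 2 := by
        intro i hi
        have hli : lvl K x i = k := (Finset.mem_filter.1 hi).2
        have := exp_lt_abs_lvl (K := K) (x := x) (i := i) (by rw [hli]; exact hkK)
        rw [hli] at this
        nlinarith [abs_nonneg (x i), sq_abs (x i), Real.exp_pos (-(k:ℝ))]
      have h1 : (S.card : ℝ) * Real.exp (-(k:ℝ)) ^ 2 ≤ 1 := by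
        calc (S.card : ℝ) * Real.exp (-(k:ℝ)) ^ 2 = ∑ _i ∈ S, Real.exp (-(k:ℝ)) ^ 2 := by
              rw [Finset.sum_const, nsmul_eq_mul]
          _ ≤ ∑ i ∈ S, x i ^ 2 := Finset.sum_le_sum hterm
          _ ≤ ∑ i, x i ^ 2 := Finset.sum_le_sum_of_subset_of_nonneg
              (Finset.subset_univ S) (fun i _ _ => sq_nonneg _)
          _ = 1 := hx
      have he : Real.exp (-(k:ℝ)) = (Real.exp (k:ℝ))⁻¹ := by
        rw [Real.exp_neg]
      rw [he, inv_pow, mul_inv_le_iff₀ (by positivity)] at h1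
      linarith
    · have h1 : (S.card : ℝ) ≤ (p : ℝ) := by
        exact_mod_cast Finset.card_le_card (Finset.subset_univ S) |>.trans
          (le_of_eq (by simp))
      have h2 : (p:ℝ) ≤ Real.exp (k:ℝ) := by
        rw [← hkK] at hexpK
        nlinarith [(by exact_mod_cast hp : (0:ℝ) < (p:ℝ))]
      have h3 : (1:ℝ) ≤ Real.exp (k:ℝ) := by
        rw [← Real.exp_zero]
        exact Real.exp_le_exp.2 (by positivity)
      nlinarith
  have hsqrt : Real.sqrt S.card ≤ Real.exp (k:ℝ) := by
    calc Real.sqrt S.card ≤ Real.sqrt (Real.exp (k:ℝ) ^ 2) := Real.sqrt_le_sqrt hcard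
      _ = Real.exp (k:ℝ) := by
          rw [Real.sqrt_sq (Real.exp_pos _).le]
  calc Real.exp (1 - (k:ℝ)) * Real.sqrt S.card
      ≤ Real.exp (1 - (k:ℝ)) * Real.exp (k:ℝ) :=
        mul_le_mul_of_nonneg_left hsqrt (Real.exp_pos _).le
    _ = Real.exp 1 := by rw [← Real.exp_add]; ring_nf


theorem pairing_le (hp : 0 < p) (B : Matrix (Fin p) (Fin p) ℝ) {x y : Fin p → ℝ}
    (hx : ∑ i, x i ^ 2 = 1) (hy : ∑ i, y i ^ 2 = 1) :
    B.mulVec x ⬝ᵥ y ≤ 12 * (⌈Real.log (2 * (p:ℝ))⌉₊ : ℝ) ^ 2 *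
      max (sSup (MSet p B)) (sSup (MSet p Bᵀ)) := by
  set K := ⌈Real.log (2 * (p:ℝ))⌉₊ with hKdef
  have hp' : (1:ℝ) ≤ (p:ℝ) := by exact_mod_cast hp
  have hlogpos : 0 < Real.log (2 * (p:ℝ)) := Real.log_pos (by linarith)
  have hK1 : 1 ≤ K := Nat.one_le_iff_ne_zero.2 (by
    simp only [hKdef, ne_eq, Nat.ceil_eq_zero, not_le]
    linarith)
  have hexpK : 2 * (p:ℝ) ≤ Real.exp K := by
    calc 2 * (p:ℝ) = Real.exp (Real.log (2 * (p:ℝ))) := by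
          rw [Real.exp_log (by linarith)]
      _ ≤ Real.exp K := Real.exp_le_exp.2 (Nat.le_ceil _)
  have hmax0 : 0 ≤ max (sSup (MSet p B)) (sSup (MSet p Bᵀ)) :=
    le_max_of_le_left (MSet_sSup_nonneg hp B)
  -- unit coordinates bounded by one
  have hx1 : ∀ i, |x i| ≤ 1 := by
    intro i
    have h1 : (x i)^2 ≤ 1 := by
      rw [← hx]
      exact Finset.single_le_sum (f := fun i => (x i)^2) (fun j _ => sq_nonneg _)
        (Finset.mem_univ i)
    nlinarith [abs_nonneg (x i), sq_abs (x i)]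
  have hy1 : ∀ i, |y i| ≤ 1 := by
    intro i
    have h1 : (y i)^2 ≤ 1 := by
      rw [← hy]
      exact Finset.single_le_sum (f := fun i => (y i)^2) (fun j _ => sq_nonneg _)
        (Finset.mem_univ i)
    nlinarith [abs_nonneg (y i), sq_abs (y i)]
  -- level pieces
  set xk : ℕ → Fin p → ℝ := fun k i => if lvl K x i = k then x i else 0 with hxk
  set yl : ℕ → Fin p → ℝ := fun l j => if lvl K y j = l then y j else 0 with hyl
  have hxsum : x = ∑ k ∈ Finset.Icc 1 K, xk k := by
    funext i
    rw [Finset.sum_apply]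
    simp only [hxk]
    rw [Finset.sum_ite_eq (Finset.Icc 1 K) (lvl K x i) (fun _ => x i)]
    rw [if_pos (lvl_mem hK1 x i)]
  have hysum : y = ∑ l ∈ Finset.Icc 1 K, yl l := by
    funext j
    rw [Finset.sum_apply]
    simp only [hyl]
    rw [Finset.sum_ite_eq (Finset.Icc 1 K) (lvl K y j) (fun _ => y j)]
    rw [if_pos (lvl_mem hK1 y j)]
  have hbil : B.mulVec x ⬝ᵥ y
      = ∑ k ∈ Finset.Icc 1 K, ∑ l ∈ Finset.Icc 1 K, B.mulVec (xk k) ⬝ᵥ yl l := by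
    conv_lhs => rw [hxsum, hysum]
    rw [mulVec_sum', sum_dotProduct']
    exact Finset.sum_congr rfl fun k _ => dotProduct_sum' _ _ _
  -- individual term bound
  have hterm : ∀ k ∈ Finset.Icc 1 K, ∀ l ∈ Finset.Icc 1 K,
      B.mulVec (xk k) ⬝ᵥ yl l ≤ Real.exp 1 * Real.exp 1 *
        max (sSup (MSet p B)) (sSup (MSet p Bᵀ)) := by
    intro k hk l hl
    set S := Finset.univ.filter (fun i => lvl K x i = k) with hSdef
    set T := Finset.univ.filter (fun j => lvl K y j = l) with hTdef
    have hrhs0 : 0 ≤ Real.exp 1 * Real.exp 1 *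
        max (sSup (MSet p B)) (sSup (MSet p Bᵀ)) := by positivity
    by_cases hSne : S.Nonempty
    · by_cases hTne : T.Nonempty
      · -- the main case
        have hckpos : (0:ℝ) ≤ Real.exp (1 - (k:ℝ)) := (Real.exp_pos _).le
        have hclpos : (0:ℝ) ≤ Real.exp (1 - (l:ℝ)) := (Real.exp_pos _).le
        -- first linearization (in x)
        obtain ⟨u, hu, hu1, hu2⟩ := sign_lemma (Bᵀ.mulVec (yl l)) S hSne
          (Real.exp (1 - (k:ℝ))) hckpos (xk k)
          (by
            intro i hi
            simp only [hxk]
            rw [if_neg]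
            intro hcon
            exact hi (by rw [hSdef]; exact Finset.mem_filter.2 ⟨Finset.mem_univ i, hcon⟩))
          (by
            intro i
            simp only [hxk]
            by_cases hli : lvl K x i = k
            · rw [if_pos hli, ← hli]
              exact abs_le_exp_lvl (hx1 i)
            · rw [if_neg hli]; simpa using hckpos)
        -- second linearization (in y)
        obtain ⟨v, hv, hv1, hv2⟩ := sign_lemma (B.mulVec u) T hTne
          (Real.exp (1 - (l:ℝ))) hclpos (yl l)
          (by
            intro j hj
            simp only [hyl]
            rw [if_neg]
            intro hcon
            exact hj (by rw [hTdef]; exact Finset.mem_filter.2 ⟨Finset.mem_univ j, hcon⟩))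
          (by
            intro j
            simp only [hyl]
            by_cases hlj : lvl K y j = l
            · rw [if_pos hlj, ← hlj]
              exact abs_le_exp_lvl (hy1 j)
            · rw [if_neg hlj]; simpa using hclpos)
        have hcardS : S.card ∈ Finset.Icc 1 p := by
          rw [Finset.mem_Icc]
          constructor
          · exact hSne.card_pos
          · calc S.card ≤ Finset.univ.card := Finset.card_le_card (Finset.subset_univ S)
              _ = p := by simp
        have hcardT : T.card ∈ Finset.Icc 1 p := by
          rw [Finset.mem_Icc]
          constructor
          · exact hTne.card_pos
          · calc T.card ≤ Finset.univ.card := Finset.card_le_card (Finset.subset_univ T)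
              _ = p := by simp
        have hpair : B.mulVec u ⬝ᵥ v ≤ max (sSup (MSet p B)) (sSup (MSet p Bᵀ)) :=
          reg_pair_le hp B hcardS hcardT hu hv
        have hcS : Real.exp (1 - (k:ℝ)) * Real.sqrt S.card ≤ Real.exp 1 :=
          coeff_le hp hK1 hexpK hx hk
        have hcT : Real.exp (1 - (l:ℝ)) * Real.sqrt T.card ≤ Real.exp 1 :=
          coeff_le hp hK1 hexpK hy hl
        have hcS0 : 0 ≤ Real.exp (1 - (k:ℝ)) * Real.sqrt S.card :=
          mul_nonneg (Real.exp_pos _).le (Real.sqrt_nonneg _)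
        have hcT0 : 0 ≤ Real.exp (1 - (l:ℝ)) * Real.sqrt T.card :=
          mul_nonneg (Real.exp_pos _).le (Real.sqrt_nonneg _)
        -- chain
        have step1 : B.mulVec (xk k) ⬝ᵥ yl l
            ≤ Real.exp (1 - (k:ℝ)) * Real.sqrt S.card * (B.mulVec u ⬝ᵥ yl l) := by
          rw [pair_eq_sum_left B (xk k) (yl l), pair_eq_sum_left B u (yl l)]
          exact hu1
        have step2 : B.mulVec u ⬝ᵥ yl l
            ≤ Real.exp (1 - (l:ℝ)) * Real.sqrt T.card * (B.mulVec u ⬝ᵥ v) := by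
          exact hv1
        have huylpos : 0 ≤ B.mulVec u ⬝ᵥ yl l := by
          rw [pair_eq_sum_left B u (yl l)]
          exact hu2
        have hpair0 : 0 ≤ B.mulVec u ⬝ᵥ v := hv2
        calc B.mulVec (xk k) ⬝ᵥ yl l
            ≤ Real.exp (1 - (k:ℝ)) * Real.sqrt S.card * (B.mulVec u ⬝ᵥ yl l) := step1
          _ ≤ Real.exp 1 * (B.mulVec u ⬝ᵥ yl l) :=
              mul_le_mul_of_nonneg_right hcS huylpos
          _ ≤ Real.exp 1 * (Real.exp (1 - (l:ℝ)) * Real.sqrt T.card * (B.mulVec u ⬝ᵥ v)) :=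
              mul_le_mul_of_nonneg_left step2 (Real.exp_pos 1).le
          _ ≤ Real.exp 1 * (Real.exp 1 * (B.mulVec u ⬝ᵥ v)) := by
              apply mul_le_mul_of_nonneg_left _ (Real.exp_pos 1).le
              exact mul_le_mul_of_nonneg_right hcT hpair0
          _ ≤ Real.exp 1 * (Real.exp 1 * max (sSup (MSet p B)) (sSup (MSet p Bᵀ))) := by
              apply mul_le_mul_of_nonneg_left _ (Real.exp_pos 1).le
              exact mul_le_mul_of_nonneg_left hpair (Real.exp_pos 1).le
          _ = Real.exp 1 * Real.exp 1 * max (sSup (MSet p B)) (sSup (MSet p Bᵀ)) := by ring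
      · -- T empty : yl l = 0
        have : yl l = 0 := by
          funext j
          simp only [hyl, Pi.zero_apply]
          rw [if_neg (fun hcon => hTne ⟨j, Finset.mem_filter.2 ⟨Finset.mem_univ j, hcon⟩⟩)]
        rw [this]
        simpa using hrhs0
    · -- S empty : xk k = 0
      have : xk k = 0 := by
        funext i
        simp only [hxk, Pi.zero_apply]
        rw [if_neg (fun hcon => hSne ⟨i, Finset.mem_filter.2 ⟨Finset.mem_univ i, hcon⟩⟩)]
      rw [this]
      simpa [Matrix.mulVec_zero] using hrhs0
  -- sum up
  have hsum : B.mulVec x ⬝ᵥ y ≤ (K:ℝ)^2 * (Real.exp 1 * Real.exp 1 *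
      max (sSup (MSet p B)) (sSup (MSet p Bᵀ))) := by
    rw [hbil]
    calc ∑ k ∈ Finset.Icc 1 K, ∑ l ∈ Finset.Icc 1 K, B.mulVec (xk k) ⬝ᵥ yl l
        ≤ ∑ k ∈ Finset.Icc 1 K, ∑ l ∈ Finset.Icc 1 K, (Real.exp 1 * Real.exp 1 *
            max (sSup (MSet p B)) (sSup (MSet p Bᵀ))) := by
          apply Finset.sum_le_sum
          intro k hk
          apply Finset.sum_le_sum
          intro l hl
          exact hterm k hk l hl
      _ = (K:ℝ)^2 * (Real.exp 1 * Real.exp 1 *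
            max (sSup (MSet p B)) (sSup (MSet p Bᵀ))) := by
          rw [Finset.sum_const, Finset.sum_const, Nat.card_Icc]
          simp only [nsmul_eq_mul]
          push_cast [Nat.add_sub_cancel]
          ring
  have hee : Real.exp 1 * Real.exp 1 ≤ 12 := by
    nlinarith [Real.exp_one_lt_d9, Real.exp_pos 1]
  calc B.mulVec x ⬝ᵥ y ≤ (K:ℝ)^2 * (Real.exp 1 * Real.exp 1 *
        max (sSup (MSet p B)) (sSup (MSet p Bᵀ))) := hsum
    _ ≤ (K:ℝ)^2 * (12 * max (sSup (MSet p B)) (sSup (MSet p Bᵀ))) := by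
        apply mul_le_mul_of_nonneg_left _ (by positivity)
        exact mul_le_mul_of_nonneg_right hee hmax0
    _ = 12 * (K:ℝ)^2 * max (sSup (MSet p B)) (sSup (MSet p Bᵀ)) := by ring


lemma unit_sum_sq {v : EuclideanSpace ℝ (Fin p)} (hv : ‖v‖ = 1) : ∑ i, v i ^ 2 = 1 := by
  have h := EuclideanSpace.norm_eq v
  rw [h] at hv
  have h0 : (0:ℝ) ≤ ∑ i, ‖v i‖^2 := by positivity
  have h2 : ∑ i, ‖v i‖^2 = 1 := by nlinarith [Real.sq_sqrt h0]
  simpa [Real.norm_eq_abs, sq_abs] using h2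

lemma opNorm_le_bound' (hp : 0 < p) (B : Matrix (Fin p) (Fin p) ℝ) :
    ‖(Matrix.toEuclideanCLM (𝕜 := ℝ) (n := Fin p) B)‖
      ≤ 12 * (⌈Real.log (2 * (p:ℝ))⌉₊ : ℝ) ^ 2 *
        max (sSup (MSet p B)) (sSup (MSet p Bᵀ)) := by
  set C := 12 * (⌈Real.log (2 * (p:ℝ))⌉₊ : ℝ) ^ 2 *
        max (sSup (MSet p B)) (sSup (MSet p Bᵀ)) with hC
  have hmax0 : 0 ≤ max (sSup (MSet p B)) (sSup (MSet p Bᵀ)) :=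
    le_max_of_le_left (MSet_sSup_nonneg hp B)
  have hC0 : 0 ≤ C := by
    rw [hC]; positivity
  set T := Matrix.toEuclideanCLM (𝕜 := ℝ) (n := Fin p) B with hT
  refine ContinuousLinearMap.opNorm_le_bound _ hC0 (fun v => ?_)
  rcases eq_or_ne v 0 with rfl | hv
  · simp
  have hvn : 0 < ‖v‖ := norm_pos_iff.2 hv
  set x : EuclideanSpace ℝ (Fin p) := ‖v‖⁻¹ • v with hxdef
  have hx1 : ‖x‖ = 1 := norm_smul_inv_norm hv
  have key : ‖T x‖ ≤ C := by
    rcases eq_or_ne (T x) 0 with h0 | h0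
    · rw [h0, norm_zero]; exact hC0
    have hTx : 0 < ‖T x‖ := norm_pos_iff.2 h0
    set y : EuclideanSpace ℝ (Fin p) := ‖T x‖⁻¹ • T x with hydef
    have hy1 : ‖y‖ = 1 := norm_smul_inv_norm h0
    have hinner : (inner ℝ (T x) y : ℝ) = ‖T x‖ := by
      rw [hydef, real_inner_smul_right, real_inner_self_eq_norm_sq]
      field_simp
    have happ : ∀ j, T x j = B.mulVec (fun i => x i) j := by
      intro j
      exact congrFun (Matrix.ofLp_toEuclideanCLM (𝕜 := ℝ) (n := Fin p) B x) j
    have hform : (inner ℝ (T x) y : ℝ) = B.mulVec (fun i => x i) ⬝ᵥ (fun j => y j) := by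
      rw [PiLp.inner_apply]
      simp only [RCLike.inner_apply, starRingEnd_apply, star_trivial]
      rw [dotProduct]
      exact Finset.sum_congr rfl (fun j _ => by rw [happ j, mul_comm])
    have hpl := pairing_le hp B (x := fun i => x i) (y := fun j => y j)
      (unit_sum_sq hx1) (unit_sum_sq hy1)
    calc ‖T x‖ = B.mulVec (fun i => x i) ⬝ᵥ (fun j => y j) := hinner.symm.trans hform
      _ ≤ C := hpl
  have hveq : T v = ‖v‖ • T x := by
    rw [hxdef, T.map_smul, smul_smul, mul_inv_cancel₀ hvn.ne', one_smul]
  rw [hveq, norm_smul, Real.norm_eq_abs, abs_of_pos hvn, mul_comm]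
  exact mul_le_mul_of_nonneg_right key hvn.le



def QSet (p : ℕ) : Set ((Fin p → ℝ) × (Fin p → ℝ)) :=
  {q | ∃ r ∈ Finset.Icc 1 p, ∃ s ∈ Finset.Icc 1 p, r ≤ s ∧ q.1 ∈ Reg p r ∧ q.2 ∈ Reg p s}

lemma MSet_eq_image (B : Matrix (Fin p) (Fin p) ℝ) :
    MSet p B = (fun q : (Fin p → ℝ) × (Fin p → ℝ) => B.mulVec q.1 ⬝ᵥ q.2) '' QSet p := by
  ext v
  constructor
  · rintro ⟨r, hr, s, hs, hrs, x, hx, y, hy, rfl⟩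
    exact ⟨(x, y), ⟨r, hr, s, hs, hrs, hx, hy⟩, rfl⟩
  · rintro ⟨⟨x, y⟩, ⟨r, hr, s, hs, hrs, hx, hy⟩, rfl⟩
    exact ⟨r, hr, s, hs, hrs, x, hx, y, hy, rfl⟩

lemma RegAll_finite (p : ℕ) :
    Set.Finite {x : Fin p → ℝ | ∃ r ∈ Finset.Icc 1 p, x ∈ Reg p r} := by
  classical
  set W : Set ℝ := {0} ∪ (⋃ r ∈ Finset.Icc 1 p, {Real.sqrt (1/(r:ℝ)), -Real.sqrt (1/(r:ℝ))})
    with hW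
  have hWfin : W.Finite := by
    apply Set.Finite.union (Set.finite_singleton 0)
    apply Set.Finite.biUnion (Finset.Icc 1 p).finite_toSet
    intro r _
    exact (Set.finite_singleton _).insert _
  have hsub : {x : Fin p → ℝ | ∃ r ∈ Finset.Icc 1 p, x ∈ Reg p r}
      ⊆ Set.pi Set.univ (fun _ : Fin p => W) := by
    rintro x ⟨r, hr, hx⟩ i _
    rcases hx.2 i with h0 | h0
    · left
      have : x i = 0 := by nlinarith [sq_nonneg (x i)]
      simp [this]
    · right
      have habs : |x i| = Real.sqrt (1/(r:ℝ)) := by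
        rw [← Real.sqrt_sq_eq_abs, h0]
      rcases abs_eq (Real.sqrt_nonneg (1/(r:ℝ))) |>.1 habs with h | h
      · exact Set.mem_biUnion hr (by simp [h])
      · exact Set.mem_biUnion hr (by simp [h])
  exact Set.Finite.subset (Set.Finite.pi (fun _ => hWfin)) hsub

lemma QSet_finite (p : ℕ) : (QSet p).Finite := by
  apply Set.Finite.subset (Set.Finite.prod (RegAll_finite p) (RegAll_finite p))
  rintro ⟨x, y⟩ ⟨r, hr, s, hs, hrs, hx, hy⟩
  exact ⟨⟨r, hr, hx⟩, ⟨s, hs, hy⟩⟩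

lemma QSet_nonempty (hp : 0 < p) : (QSet p).Nonempty :=
  ⟨((fun _ => 1 / Real.sqrt p), (fun _ => 1 / Real.sqrt p)),
    p, by simp [Finset.mem_Icc, hp, Nat.one_le_iff_ne_zero, hp.ne'],
    p, by simp [Finset.mem_Icc, hp, Nat.one_le_iff_ne_zero, hp.ne'],
    le_refl p, const_mem_Reg hp, const_mem_Reg hp⟩

lemma measurable_entry (j i : Fin p) :
    Measurable (fun B : Matrix (Fin p) (Fin p) ℝ => B j i) :=
  (measurable_pi_apply (X := fun _ : Fin p => ℝ) i).comp
    (measurable_pi_apply (X := fun _ : Fin p => Fin p → ℝ) j)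

lemma measurable_pairing (q : (Fin p → ℝ) × (Fin p → ℝ)) :
    Measurable (fun B : Matrix (Fin p) (Fin p) ℝ => B.mulVec q.1 ⬝ᵥ q.2) := by
  have : (fun B : Matrix (Fin p) (Fin p) ℝ => B.mulVec q.1 ⬝ᵥ q.2)
      = fun B => ∑ j, (∑ i, B j i * q.1 i) * q.2 j := rfl
  rw [this]
  apply Finset.measurable_sum
  intro j _
  apply Measurable.mul _ measurable_const
  apply Finset.measurable_sum
  intro i _
  exact (measurable_entry j i).mul measurable_const

lemma measurable_sSup_MSet (hp : 0 < p) :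
    Measurable (fun B : Matrix (Fin p) (Fin p) ℝ => sSup (MSet p B)) := by
  classical
  set F : Finset ((Fin p → ℝ) × (Fin p → ℝ)) := (QSet_finite p).toFinset with hF
  have hFne : F.Nonempty := by
    rw [hF, Set.Finite.toFinset_nonempty]
    exact QSet_nonempty hp
  have hrw : (fun B : Matrix (Fin p) (Fin p) ℝ => sSup (MSet p B))
      = fun B => F.sup' hFne (fun q => B.mulVec q.1 ⬝ᵥ q.2) := by
    funext B
    rw [Finset.sup'_eq_csSup_image, MSet_eq_image]
    congr 1
    rw [hF, Set.Finite.coe_toFinset]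
  rw [hrw]
  have hm := Finset.measurable_sup' hFne (fun q (_ : q ∈ F) => measurable_pairing q)
  have heq : (F.sup' hFne fun q (B : Matrix (Fin p) (Fin p) ℝ) => B.mulVec q.1 ⬝ᵥ q.2)
      = fun (B : Matrix (Fin p) (Fin p) ℝ) => F.sup' hFne fun q => B.mulVec q.1 ⬝ᵥ q.2 := by
    funext B
    rw [Finset.sup'_apply]
  rwa [heq] at hm


lemma measurable_transpose : Measurable (fun B : Matrix (Fin p) (Fin p) ℝ => Bᵀ) := by
  apply measurable_pi_lambda (X := fun _ : Fin p => Fin p → ℝ)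
  intro i
  apply measurable_pi_lambda
  intro j
  exact measurable_entry j i

end OpAux

open OpAux in
/-- **Computing the operator norm: symmetrically distributed matrices.** If `A` and `Aᵀ` are
identically distributed, then for every `t ≥ 0`,
`P{‖A‖ ≥ t} ≤ 2 P{12⌈ln(2p)⌉² max_{r ≤ s} max_{x ∈ Reg_p(r), y ∈ Reg_p(s)} ⟨Ax,y⟩ ≥ t}`. -/
theorem opNorm_tail_of_symmetric_distribution
    (p : ℕ) (hp : 0 < p)
    (Ω : Type) [MeasureSpace Ω] (hP : IsProbabilityMeasure (ℙ : Measure Ω))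
    (A : Ω → Matrix (Fin p) (Fin p) ℝ) (hAm : Measurable A)
    (hsymm : Measure.map A ℙ = Measure.map (fun ω => (A ω)ᵀ) ℙ)
    (t : ℝ) (ht : 0 ≤ t) :
    ℙ {ω | opNorm (A ω) ≥ t}
      ≤ 2 * ℙ {ω | 12 * (⌈Real.log (2 * p)⌉₊ : ℝ) ^ 2 *
          sSup {v : ℝ | ∃ r ∈ Finset.Icc 1 p, ∃ s ∈ Finset.Icc 1 p, r ≤ s ∧
            ∃ x ∈ Reg p r, ∃ y ∈ Reg p s, v = (A ω).mulVec x ⬝ᵥ y} ≥ t} := by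
  classical
  set f : Matrix (Fin p) (Fin p) ℝ → ℝ :=
    fun B => 12 * (⌈Real.log (2 * (p:ℝ))⌉₊ : ℝ) ^ 2 * sSup (MSet p B) with hf
  have hfm : Measurable f := (measurable_sSup_MSet hp).const_mul _
  have hG : MeasurableSet {B : Matrix (Fin p) (Fin p) ℝ | f B ≥ t} := by
    have : {B : Matrix (Fin p) (Fin p) ℝ | f B ≥ t} = f ⁻¹' (Set.Ici t) := rfl
    rw [this]
    exact hfm measurableSet_Ici
  have hsub : {ω | opNorm (A ω) ≥ t}
      ⊆ {ω | f (A ω) ≥ t} ∪ {ω | f ((A ω)ᵀ) ≥ t} := by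
    intro ω hω
    have h1 : opNorm (A ω) ≤ 12 * (⌈Real.log (2 * (p:ℝ))⌉₊ : ℝ) ^ 2 *
        max (sSup (MSet p (A ω))) (sSup (MSet p (A ω)ᵀ)) := opNorm_le_bound' hp (A ω)
    have hKnn : (0:ℝ) ≤ 12 * (⌈Real.log (2 * (p:ℝ))⌉₊ : ℝ) ^ 2 := by positivity
    rcases le_total (sSup (MSet p ((A ω)ᵀ))) (sSup (MSet p (A ω))) with hc | hc
    · left
      show f (A ω) ≥ t
      rw [max_eq_left hc] at h1
      exact le_trans (le_trans hω h1) (le_refl _)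
    · right
      show f ((A ω)ᵀ) ≥ t
      rw [max_eq_right hc] at h1
      exact le_trans (le_trans hω h1) (le_refl _)
  have hE2E1 : ℙ {ω | f ((A ω)ᵀ) ≥ t} = ℙ {ω | f (A ω) ≥ t} := by
    have hAt : Measurable fun ω => (A ω)ᵀ := measurable_transpose.comp hAm
    have h1 : ℙ {ω | f (A ω) ≥ t}
        = Measure.map A ℙ {B : Matrix (Fin p) (Fin p) ℝ | f B ≥ t} :=
      (Measure.map_apply hAm hG).symm
    have h2 : ℙ {ω | f ((A ω)ᵀ) ≥ t}
        = Measure.map (fun ω => (A ω)ᵀ) ℙ {B : Matrix (Fin p) (Fin p) ℝ | f B ≥ t} :=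
      (Measure.map_apply hAt hG).symm
    rw [h1, h2, hsymm]
  have hfinal : ℙ {ω | opNorm (A ω) ≥ t} ≤ 2 * ℙ {ω | f (A ω) ≥ t} := by
    calc ℙ {ω | opNorm (A ω) ≥ t}
        ≤ ℙ ({ω | f (A ω) ≥ t} ∪ {ω | f ((A ω)ᵀ) ≥ t}) := measure_mono hsub
      _ ≤ ℙ {ω | f (A ω) ≥ t} + ℙ {ω | f ((A ω)ᵀ) ≥ t} := measure_union_le _ _
      _ = ℙ {ω | f (A ω) ≥ t} + ℙ {ω | f (A ω) ≥ t} := by rw [hE2E1]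
      _ = 2 * ℙ {ω | f (A ω) ≥ t} := (two_mul _).symm
  exact hfinal
end

section
/- Let p be a positive integer, set k_0 = ⌈ln(2p)⌉, and let 𝒩 be the set of all vectors x ∈ S^{p−1} such that each coordinate x_i is either 0 or satisfies |x_i| = 2^{−k} for some k ∈ {0, 1, ..., k_0}. Then every x ∈ 𝒩 can be represented as x = λ_1 x^{(1)} + ... + λ_{k_0+1} x^{(k_0+1)} where each λ_k ∈ [0, 1] and each x^{(k)} is a regular vector in Reg_p (grouping the coordinates of x by their common absolute value). -/
set_option maxHeartbeats 1000000


open MeasureTheory ProbabilityTheory Matrix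

/-- The Euclidean norm on ℝ^p. -/
noncomputable def norm2 {p : ℕ} (x : Fin p → ℝ) : ℝ := Real.sqrt (∑ i, (x i) ^ 2)

/-- The unit Euclidean sphere `S^{p-1}` in ℝ^p. -/
def unitSphere (p : ℕ) : Set (Fin p → ℝ) := {x | norm2 x = 1}

/-- The discretized net: unit vectors each of whose coordinates is `0` or of absolute value
`2^{-k}` for some `k ∈ {0, 1, …, k₀}`, where `k₀ = ⌈ln(2p)⌉`. -/
def dyadicNet (p : ℕ) : Set (Fin p → ℝ) :=
  {x ∈ unitSphere p | ∀ i, x i = 0 ∨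
    ∃ k : ℕ, k ≤ ⌈Real.log (2 * p)⌉₊ ∧ |x i| = 2 ^ (-(k : ℤ))}

/-- **Decomposition of net vectors into regular vectors:** every vector of the dyadic net is a
combination `x = ∑_{k=1}^{k₀+1} λₖ x⁽ᵏ⁾` with `λₖ ∈ [0,1]` and `x⁽ᵏ⁾ ∈ Reg_p`. -/
theorem dyadicNet_decomposition (p : ℕ) (hp : 0 < p) :
    ∀ x ∈ dyadicNet p,
      ∃ (lam : Fin (⌈Real.log (2 * p)⌉₊ + 1) → ℝ)
        (v : Fin (⌈Real.log (2 * p)⌉₊ + 1) → (Fin p → ℝ)),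
        (∀ k, lam k ∈ Set.Icc (0 : ℝ) 1) ∧ (∀ k, v k ∈ RegAll p) ∧
        x = ∑ k, lam k • v k := by
  classical
  intro x hx
  obtain ⟨hx1, hx2⟩ := hx
  have hsum : ∑ i, (x i) ^ 2 = 1 := by
    have h1 : Real.sqrt (∑ i, (x i) ^ 2) = 1 := hx1
    have h2 : (0:ℝ) ≤ ∑ i, (x i) ^ 2 := Finset.sum_nonneg fun i _ => sq_nonneg _
    nlinarith [Real.sq_sqrt h2]
  set N := ⌈Real.log (2 * p)⌉₊ with hN
  set S : Fin (N+1) → Finset (Fin p) :=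
    fun k => Finset.univ.filter (fun i => |x i| = 2 ^ (-(k:ℤ))) with hS
  have hSsum : ∀ k : Fin (N+1), ∑ i ∈ S k, (x i)^2 = ((S k).card : ℝ) * ((2:ℝ)^(-(k:ℤ)))^2 := by
    intro k
    rw [Finset.sum_congr rfl (fun i hi => ?_), Finset.sum_const, nsmul_eq_mul]
    have hi' := (Finset.mem_filter.mp hi).2
    rw [← sq_abs, hi']
  have hcardle : ∀ k : Fin (N+1), ((S k).card : ℝ) * ((2:ℝ)^(-(k:ℤ)))^2 ≤ 1 := by
    intro k
    rw [← hSsum k, ← hsum]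
    exact Finset.sum_le_sum_of_subset_of_nonneg (Finset.subset_univ _)
      (fun i _ _ => sq_nonneg _)
  set lam : Fin (N+1) → ℝ := fun k => 2 ^ (-(k:ℤ)) * Real.sqrt ((S k).card) with hlam
  set e0 : Fin p → ℝ := fun i => if i = ⟨0, hp⟩ then 1 else 0 with he0
  set v : Fin (N+1) → Fin p → ℝ := fun k i =>
    if (S k).card = 0 then e0 i
    else if i ∈ S k then x i * 2 ^ ((k:ℤ)) / Real.sqrt ((S k).card) else 0 with hv
  have h2pos : ∀ k : Fin (N+1), (0:ℝ) < 2 ^ (-(k:ℤ)) := fun k => by positivity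
  refine ⟨lam, v, ?_, ?_, ?_⟩
  · intro k
    have h0 : (0:ℝ) ≤ lam k := mul_nonneg (h2pos k).le (Real.sqrt_nonneg _)
    have hsq : lam k ^ 2 = ((S k).card : ℝ) * ((2:ℝ)^(-(k:ℤ)))^2 := by
      simp only [hlam, mul_pow, Real.sq_sqrt (Nat.cast_nonneg _)]
      ring
    exact ⟨h0, by nlinarith [hcardle k]⟩
  · intro k
    by_cases hc : (S k).card = 0
    · have hvk : v k = e0 := by
        funext i; show (if (S k).card = 0 then e0 i else _) = e0 i
        rw [if_pos hc]
      rw [hvk]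
      refine Set.mem_biUnion (show (1:ℕ) ∈ Finset.Icc 1 p by
        simp only [Finset.mem_Icc]; omega) ?_
      constructor
      · simp [he0, Finset.sum_ite_eq', pow_two]
      · intro i
        by_cases h : i = ⟨0, hp⟩ <;> simp [he0, h]
    · have hc1 : 1 ≤ (S k).card := Nat.one_le_iff_ne_zero.mpr hc
      have hcp : (S k).card ≤ p := le_trans (Finset.card_le_univ _) (by simp)
      have hcpos : (0:ℝ) < ((S k).card : ℝ) := by exact_mod_cast hc1
      have hsq2 : Real.sqrt ((S k).card) ^ 2 = ((S k).card : ℝ) :=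
        Real.sq_sqrt hcpos.le
      have hv2 : ∀ i, (v k i)^2 = if i ∈ S k then 1 / ((S k).card : ℝ) else 0 := by
        intro i
        by_cases hi : i ∈ S k
        · have hxi : |x i| = 2 ^ (-(k:ℤ)) := (Finset.mem_filter.mp hi).2
          have h2 : (2:ℝ)^(-(k:ℤ)) * (2:ℝ)^((k:ℤ)) = 1 := by
            rw [← zpow_add₀ (two_ne_zero)]; simp
          simp only [hv, hc, if_false, hi, if_pos, if_true]
          rw [div_pow, mul_pow, ← sq_abs (x i), hxi, hsq2, ← mul_pow, h2, one_pow]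
        · show (if (S k).card = 0 then e0 i else if i ∈ S k then _ else 0) ^ 2 = _
          rw [if_neg hc, if_neg hi, if_neg hi]
          norm_num
      refine Set.mem_biUnion (show (S k).card ∈ Finset.Icc 1 p by simp [hc1, hcp]) ?_
      constructor
      · have : ∑ i, (v k i)^2 = ∑ i ∈ S k, (1 / ((S k).card : ℝ)) := by
          rw [← Finset.sum_subset (Finset.subset_univ (S k)) (fun i _ hi => by
            rw [hv2 i, if_neg hi])]
          exact Finset.sum_congr rfl fun i hi => by rw [hv2 i, if_pos hi]
        rw [this, Finset.sum_const, nsmul_eq_mul, mul_one_div, div_self hcpos.ne']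
      · intro i
        rw [hv2 i]
        by_cases hi : i ∈ S k <;> simp [hi]
  · funext i
    rw [Finset.sum_apply]
    have key : ∀ k : Fin (N+1), (lam k • v k) i = if i ∈ S k then x i else 0 := by
      intro k
      by_cases hc : (S k).card = 0
      · have hiS : i ∉ S k := by
          rw [Finset.card_eq_zero.mp hc]; exact Finset.notMem_empty i
        rw [if_neg hiS]
        show (2 ^ (-(k:ℤ)) * Real.sqrt ((S k).card)) * v k i = 0
        rw [hc]
        norm_num
      · by_cases hi : i ∈ S k
        · have hcpos : (0:ℝ) < ((S k).card : ℝ) := by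
            exact_mod_cast Nat.one_le_iff_ne_zero.mpr hc
          have hrs : Real.sqrt ((S k).card) ≠ 0 := (Real.sqrt_pos.mpr hcpos).ne'
          have h2 : (2:ℝ)^(-(k:ℤ)) * (2:ℝ)^((k:ℤ)) = 1 := by
            rw [← zpow_add₀ (two_ne_zero)]; simp
          rw [if_pos hi]
          show (2 ^ (-(k:ℤ)) * Real.sqrt ((S k).card)) *
            (if (S k).card = 0 then e0 i else if i ∈ S k then
              x i * 2 ^ ((k:ℤ)) / Real.sqrt ((S k).card) else 0) = x i
          rw [if_neg hc, if_pos hi]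
          have hr : (2:ℝ)^(-(k:ℤ)) * Real.sqrt ((S k).card) *
              (x i * 2^((k:ℤ)) / Real.sqrt ((S k).card)) =
              ((2:ℝ)^(-(k:ℤ)) * 2^((k:ℤ))) *
              (Real.sqrt ((S k).card) / Real.sqrt ((S k).card)) * x i := by ring
          rw [hr, h2, div_self hrs, one_mul, one_mul]
        · rw [if_neg hi]
          show (2 ^ (-(k:ℤ)) * Real.sqrt ((S k).card)) *
            (if (S k).card = 0 then e0 i else if i ∈ S k then
              x i * 2 ^ ((k:ℤ)) / Real.sqrt ((S k).card) else 0) = 0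
          rw [if_neg hc, if_neg hi, mul_zero]
    rw [Finset.sum_congr rfl fun k _ => key k]
    by_cases hx0 : x i = 0
    · simp [hx0]
    · obtain ⟨k, hk, hxk⟩ := (hx2 i).resolve_left hx0
      set k' : Fin (N+1) := ⟨k, Nat.lt_succ_of_le hk⟩ with hk'
      have hik' : i ∈ S k' := by
        simp only [hS, Finset.mem_filter, Finset.mem_univ, true_and]
        exact hxk
      rw [Finset.sum_eq_single k' (fun j _ hj => ?_) (fun h => absurd (Finset.mem_univ k') h),
        if_pos hik']
      rw [if_neg]
      intro hij
      apply hj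
      have hj2 : |x i| = 2 ^ (-(j:ℤ)) := (Finset.mem_filter.mp hij).2
      have hk2 : |x i| = 2 ^ (-(k':ℤ)) := hxk
      have heq : (2:ℝ) ^ (-(j:ℤ)) = 2 ^ (-(k':ℤ)) := by rw [← hj2]; exact hk2
      have : -(j:ℤ) = -(k':ℤ) :=
        zpow_right_injective₀ (by norm_num : (0:ℝ) < 2) (by norm_num) heq
      have : (j:ℤ) = (k':ℤ) := by omega
      exact Fin.ext (by exact_mod_cast this)
end
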